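/- arXiv:0906.3529 — 8 statements merged into one kernel-verified Lean document; each statement's English description precedes it below -/
import Mathlib

section
/- Let K_1, …, K_d be linearly independent real symmetric m×m matrices such that some real linear combination ∑_j λ_j K_j is positive definite. Then for every t ∈ ℝ^d the following are equivalent: (i) there exists a positive definite real symmetric m×m matrix S with trace(S·K_j) = t_j for all j = 1,…,d; (ii) for every nonzero λ ∈ ℝ^d such that ∑_j λ_j K_j is positive semidefinite, one has ∑_j t_j λ_j > 0. (This is the duality between the cone of sufficient statistics and the cone of concentration matrices: C_L is the dual cone of K_L.) -/
open Matrix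

private lemma aux_sum_smul_ne_zero {m d : ℕ} {K : Fin d → Matrix (Fin m) (Fin m) ℝ}
    (hindep : LinearIndependent ℝ K) {l : Fin d → ℝ} (hl : l ≠ 0) :
    (∑ j, l j • K j) ≠ 0 := by
  intro h
  exact hl (funext fun i => Fintype.linearIndependent_iff.mp hindep l h i)

private lemma aux_trace_transpose_mul_self_pos' {m : ℕ} {A : Matrix (Fin m) (Fin m) ℝ} (h : A ≠ 0) :
    0 < (Aᵀ * A).trace := by
  have key : (Aᵀ * A).trace = ∑ j, ∑ i, (A i j)^2 := by
    simp [Matrix.trace, Matrix.diag, Matrix.mul_apply, sq]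
  rw [key]
  obtain ⟨i, j, hij⟩ : ∃ i j, A i j ≠ 0 := by
    by_contra hc; push_neg at hc; exact h (by ext i j; simp [hc])
  refine Finset.sum_pos' (fun j _ => Finset.sum_nonneg fun i _ => sq_nonneg _)
    ⟨j, Finset.mem_univ _, Finset.sum_pos' (fun i _ => sq_nonneg _)
      ⟨i, Finset.mem_univ _, by positivity⟩⟩

private lemma aux_trace_mul_sum_smul' {m d : ℕ} (A : Matrix (Fin m) (Fin m) ℝ)
    (K : Fin d → Matrix (Fin m) (Fin m) ℝ) (l : Fin d → ℝ) :
    (A * ∑ j, l j • K j).trace = ∑ j, l j * (A * K j).trace := by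
  rw [Finset.mul_sum, trace_sum]
  exact Finset.sum_congr rfl fun j _ => by rw [mul_smul_comm, trace_smul, smul_eq_mul]

private lemma aux_trace_sum_smul_mul' {m d : ℕ} (A : Matrix (Fin m) (Fin m) ℝ)
    (K : Fin d → Matrix (Fin m) (Fin m) ℝ) (l : Fin d → ℝ) :
    ((∑ j, l j • K j) * A).trace = ∑ j, l j * (K j * A).trace := by
  rw [Finset.sum_mul, trace_sum]
  exact Finset.sum_congr rfl fun j _ => by rw [smul_mul_assoc, trace_smul, smul_eq_mul]

private lemma aux_right_inverse {m d : ℕ} (K : Fin d → Matrix (Fin m) (Fin m) ℝ)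
    (hsymm : ∀ j, (K j).IsSymm) (hindep : LinearIndependent ℝ K) :
    ∃ g : (Fin d → ℝ) → Matrix (Fin m) (Fin m) ℝ,
      Continuous g ∧ g 0 = 0 ∧ ∀ u j, (g u * K j).trace = u j := by
  classical
  set G : Matrix (Fin d) (Fin d) ℝ := Matrix.of fun i j => (K i * K j).trace with hGdef
  have hGentry : ∀ i j, G i j = (K i * K j).trace := fun i j => rfl
  have hGsym : Gᵀ = G := by
    ext i j
    simp only [transpose_apply, hGentry]
    exact trace_mul_comm _ _
  have hGpd : G.PosDef := by
    refine Matrix.PosDef.of_dotProduct_mulVec_pos ?_ ?_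
    · show Gᴴ = G
      ext i j
      simp only [conjTranspose_apply, star_trivial, hGentry]
      exact trace_mul_comm _ _
    · intro l hl
      have hM0 : (∑ j, l j • K j) ≠ 0 := aux_sum_smul_ne_zero hindep hl
      set M := ∑ j, l j • K j with hM
      have hMsym : Mᵀ = M := by
        rw [hM, transpose_sum]
        exact Finset.sum_congr rfl fun j _ => by rw [transpose_smul, (hsymm j)]
      have key : star l ⬝ᵥ G *ᵥ l = (Mᵀ * M).trace := by
        rw [hMsym]
        have h1 : (M * M).trace = ∑ j, l j * (M * K j).trace := by
          conv_lhs => rw [hM]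
          rw [← hM, aux_trace_mul_sum_smul' M K l]
        have h2 : ∀ j, (M * K j).trace = ∑ i, l i * G i j := by
          intro j
          rw [hM, aux_trace_sum_smul_mul' (K j) K l]
          exact Finset.sum_congr rfl fun i _ => by rw [hGentry]
        rw [h1]
        simp only [star_trivial, dotProduct, mulVec, Pi.star_apply]
        refine Finset.sum_congr rfl fun j _ => ?_
        rw [h2 j, Finset.mul_sum, Finset.mul_sum]
        refine Finset.sum_congr rfl fun i _ => ?_
        rw [hGentry j i, hGentry i j, trace_mul_comm (K j) (K i)]
        ring
      rw [key]
      exact aux_trace_transpose_mul_self_pos' hM0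
  have hdet : IsUnit G.det := isUnit_iff_ne_zero.mpr (ne_of_gt hGpd.det_pos)
  have hGinv : G * G⁻¹ = 1 := mul_nonsing_inv G hdet
  refine ⟨fun u => ∑ i, (G⁻¹ *ᵥ u) i • K i, ?_, ?_, ?_⟩
  · refine continuous_finset_sum _ fun i _ => Continuous.fun_smul ?_ continuous_const
    simp only [mulVec, dotProduct]
    exact continuous_finset_sum _ fun j _ => continuous_const.mul (continuous_apply j)
  · simp
  · intro u j
    rw [aux_trace_sum_smul_mul' (K j) K (G⁻¹ *ᵥ u)]
    have : ∀ i, (G⁻¹ *ᵥ u) i * (K i * K j).trace = (G⁻¹ *ᵥ u) i * G i j := fun i => rfl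
    simp only [this]
    have h3 : ∑ i, (G⁻¹ *ᵥ u) i * G i j = ((G⁻¹ *ᵥ u) ᵥ* G) j := by
      simp [vecMul, dotProduct]
    rw [h3, ← mulVec_transpose, hGsym, mulVec_mulVec, hGinv, one_mulVec]

section aux2
variable {m : ℕ}

private lemma aux_dot_transpose (A : Matrix (Fin m) (Fin m) ℝ) (x : Fin m → ℝ) :
    x ⬝ᵥ Aᵀ *ᵥ x = x ⬝ᵥ A *ᵥ x := by
  rw [dotProduct_mulVec, vecMul_transpose, dotProduct_comm]

private lemma aux_trace_pos {S M : Matrix (Fin m) (Fin m) ℝ}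
    (hS : S.PosDef) (hM : M.PosSemidef) (hM0 : M ≠ 0) : 0 < (S * M).trace := by
  obtain ⟨B, rfl⟩ : ∃ B : Matrix (Fin m) (Fin m) ℝ, M = Bᴴ * B := by
    open MatrixOrder in
    obtain ⟨X, hX, -, rfl⟩ := CFC.exists_sqrt_of_isSelfAdjoint_of_quasispectrumRestricts
      hM.isHermitian (QuasispectrumRestricts.nnreal_of_nonneg hM.nonneg)
    exact ⟨X, by rw [← star_eq_conjTranspose, hX.star_eq]⟩
  have hB : B ≠ 0 := fun h => hM0 (by simp [h])
  have hdiag : ∀ i, (B * S * Bᴴ) i i = (B i) ⬝ᵥ S *ᵥ (B i) := by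
    intro i
    simp only [Matrix.mul_apply, conjTranspose_apply, star_trivial, dotProduct, mulVec,
      Finset.sum_mul, Finset.mul_sum]
    rw [Finset.sum_comm]
    exact Finset.sum_congr rfl fun k _ => Finset.sum_congr rfl fun j _ => by ring
  have h1 : (S * (Bᴴ * B)).trace = (B * S * Bᴴ).trace := by
    rw [← Matrix.mul_assoc, trace_mul_comm, Matrix.mul_assoc, ← Matrix.mul_assoc]
  rw [h1]
  rw [Matrix.trace]
  obtain ⟨i0, hi0⟩ : ∃ i, B i ≠ 0 := by
    by_contra hc; push_neg at hc; exact hB (by ext i j; simp [congrFun (hc i) j])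
  refine Finset.sum_pos' (fun i _ => ?_) ⟨i0, Finset.mem_univ _, ?_⟩
  · rw [Matrix.diag_apply, hdiag]
    simpa [star_trivial] using hS.posSemidef.dotProduct_mulVec_nonneg (B i)
  · rw [Matrix.diag_apply, hdiag]
    simpa [star_trivial] using hS.dotProduct_mulVec_pos hi0

private lemma aux_dot_vecMulVec (a x : Fin m → ℝ) :
    x ⬝ᵥ (vecMulVec a a) *ᵥ x = (a ⬝ᵥ x)^2 := by
  simp only [dotProduct, mulVec, vecMulVec_apply, sq, Finset.sum_mul, Finset.mul_sum]
  rw [Finset.sum_comm]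
  exact Finset.sum_congr rfl fun k _ => Finset.sum_congr rfl fun j _ => by ring

private lemma aux_trace_vecMulVec_mul (a : Fin m → ℝ) (M : Matrix (Fin m) (Fin m) ℝ) :
    ((vecMulVec a a) * M).trace = a ⬝ᵥ M *ᵥ a := by
  simp only [Matrix.trace, Matrix.diag_apply, Matrix.mul_apply, vecMulVec_apply, dotProduct,
    mulVec, Finset.mul_sum]
  rw [Finset.sum_comm]
  exact Finset.sum_congr rfl fun k _ => Finset.sum_congr rfl fun j _ => by ring

private lemma aux_isOpen_quadPos (m : ℕ) :
    IsOpen {A : Matrix (Fin m) (Fin m) ℝ | ∀ x : Fin m → ℝ, x ≠ 0 → 0 < x ⬝ᵥ A *ᵥ x} := by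
  rw [isOpen_iff_mem_nhds]
  intro A₀ hA₀
  have hcont : Continuous fun p : Matrix (Fin m) (Fin m) ℝ × (Fin m → ℝ) =>
      p.2 ⬝ᵥ p.1 *ᵥ p.2 := by
    simp only [dotProduct, mulVec]
    refine continuous_finset_sum _ fun i _ => Continuous.mul ?_ (continuous_finset_sum _ fun j _ => Continuous.mul ?_ ?_)
    · exact (continuous_apply i).comp continuous_snd
    · exact ((continuous_apply j).comp ((continuous_apply i).comp continuous_fst))
    · exact (continuous_apply j).comp continuous_snd
  have hsph : IsCompact (Metric.sphere (0 : Fin m → ℝ) 1) := isCompact_sphere _ _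
  have hev : ∀ᶠ A in nhds A₀, ∀ x ∈ Metric.sphere (0 : Fin m → ℝ) 1, 0 < x ⬝ᵥ A *ᵥ x := by
    apply hsph.eventually_forall_of_forall_eventually
    intro x hx
    have hx0 : x ≠ 0 := by
      intro h; rw [h] at hx; simp at hx
    have hpos : (0:ℝ) < x ⬝ᵥ A₀ *ᵥ x := hA₀ x hx0
    have hO : IsOpen {p : Matrix (Fin m) (Fin m) ℝ × (Fin m → ℝ) | 0 < p.2 ⬝ᵥ p.1 *ᵥ p.2} :=
      isOpen_lt continuous_const hcont
    exact hO.eventually_mem hpos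
  refine Filter.mem_of_superset hev ?_
  intro A hA x hx0
  have hnx : ‖x‖ ≠ 0 := by simpa using hx0
  set y := ‖x‖⁻¹ • x with hy
  have hysph : y ∈ Metric.sphere (0 : Fin m → ℝ) 1 := by
    simp [hy, norm_smul, abs_of_nonneg (inv_nonneg.mpr (norm_nonneg x)), inv_mul_cancel₀ hnx]
  have hq := hA y hysph
  have hscale : y ⬝ᵥ A *ᵥ y = ‖x‖⁻¹ * (‖x‖⁻¹ * (x ⬝ᵥ A *ᵥ x)) := by
    rw [hy, Matrix.mulVec_smul, smul_dotProduct, dotProduct_smul]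
    simp [smul_eq_mul]
  rw [hscale] at hq
  have h2 : (0:ℝ) < ‖x‖⁻¹ := by positivity
  by_contra hcon
  push_neg at hcon
  have : ‖x‖⁻¹ * (‖x‖⁻¹ * (x ⬝ᵥ A *ᵥ x)) ≤ 0 :=
    mul_nonpos_of_nonneg_of_nonpos h2.le (mul_nonpos_of_nonneg_of_nonpos h2.le hcon)
  linarith
end aux2



/-- Duality between the cone of sufficient statistics and the cone of
concentration matrices: a vector `t ∈ ℝ^d` is the image of a positive definite
matrix under `S ↦ (⟨S,K₁⟩,…,⟨S,K_d⟩)` iff `⟨t,λ⟩ > 0` for every nonzero `λ`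
with `∑ λⱼ Kⱼ` positive semidefinite. -/
theorem sufficient_statistics_cone_dual_to_concentration_cone
    (m d : ℕ) (K : Fin d → Matrix (Fin m) (Fin m) ℝ)
    (hsymm : ∀ j, (K j).IsSymm)
    (hindep : LinearIndependent ℝ K)
    (hpd : ∃ l : Fin d → ℝ, (∑ j, l j • K j).PosDef)
    (t : Fin d → ℝ) :
    (∃ S : Matrix (Fin m) (Fin m) ℝ, S.PosDef ∧ ∀ j, (S * K j).trace = t j) ↔
      (∀ l : Fin d → ℝ, l ≠ 0 → (∑ j, l j • K j).PosSemidef →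
        0 < ∑ j, t j * l j) := by
  constructor
  · rintro ⟨S, hS, hTr⟩ l hl hPSD
    have hM0 : (∑ j, l j • K j) ≠ 0 := aux_sum_smul_ne_zero hindep hl
    have hpos := aux_trace_pos hS hPSD hM0
    rw [aux_trace_mul_sum_smul' S K l] at hpos
    calc (0:ℝ) < ∑ j, l j * (S * K j).trace := hpos
      _ = ∑ j, t j * l j := Finset.sum_congr rfl fun j _ => by rw [hTr j]; ring
  · intro hyp
    classical
    -- the open convex set U
    set P : Set (Matrix (Fin m) (Fin m) ℝ) :=
      {A | ∀ x : Fin m → ℝ, x ≠ 0 → 0 < x ⬝ᵥ A *ᵥ x} with hPdef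
    set U : Set (Fin d → ℝ) :=
      {u | ∃ A ∈ P, ∀ j, (A * K j).trace = u j} with hUdef
    -- positive definite matrices give members of P
    have hPD_mem : ∀ {S : Matrix (Fin m) (Fin m) ℝ}, S.PosDef → S ∈ P := by
      intro S hS x hx
      simpa [star_trivial] using hS.dotProduct_mulVec_pos hx
    -- main claim : t ∈ U
    have htU : t ∈ U := by
      by_contra htU
      -- U is convex
      have hUconv : Convex ℝ U := by
        rintro u₁ ⟨A₁, hA₁, hA₁t⟩ u₂ ⟨A₂, hA₂, hA₂t⟩ a b ha hb hab
        refine ⟨a • A₁ + b • A₂, ?_, ?_⟩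
        · intro x hx
          have h1 := hA₁ x hx
          have h2 := hA₂ x hx
          have e : x ⬝ᵥ (a • A₁ + b • A₂) *ᵥ x
              = a * (x ⬝ᵥ A₁ *ᵥ x) + b * (x ⬝ᵥ A₂ *ᵥ x) := by
            rw [add_mulVec, dotProduct_add, smul_mulVec, smul_mulVec,
              dotProduct_smul, dotProduct_smul]
            simp [smul_eq_mul]
          rw [e]
          rcases eq_or_lt_of_le ha with ha0 | ha0
          · have hb1 : b = 1 := by linarith
            rw [← ha0, hb1]; simpa using h2
          · nlinarith
        · intro j
          rw [add_mul, trace_add, smul_mul_assoc, smul_mul_assoc, trace_smul, trace_smul,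
            hA₁t j, hA₂t j]
          simp [smul_eq_mul]
      -- U is open
      obtain ⟨g, hgcont, hg0, hgtr⟩ := aux_right_inverse K hsymm hindep
      have hUopen : IsOpen U := by
        rw [isOpen_iff_mem_nhds]
        rintro u₀ ⟨A₀, hA₀, hA₀t⟩
        have hh : Continuous fun u => A₀ + g (u - u₀) :=
          continuous_const.add (hgcont.comp (continuous_id.sub continuous_const))
        have hmem : (fun u => A₀ + g (u - u₀)) ⁻¹' P ∈ nhds u₀ := by
          refine (hh.isOpen_preimage _ (aux_isOpen_quadPos m)).mem_nhds ?_
          have he : A₀ + g (u₀ - u₀) = A₀ := by simp [hg0]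
          show A₀ + g (u₀ - u₀) ∈ P
          rw [he]; exact hA₀
        refine Filter.mem_of_superset hmem ?_
        intro u hu
        refine ⟨A₀ + g (u - u₀), hu, fun j => ?_⟩
        rw [add_mul, trace_add, hA₀t j, hgtr (u - u₀) j]
        simp
      -- separating functional
      obtain ⟨f, hf⟩ := geometric_hahn_banach_open_point hUconv hUopen htU
      set μ : Fin d → ℝ := fun j => f (Pi.single j 1) with hμdef
      have hfeq : ∀ u : Fin d → ℝ, f u = ∑ j, u j * μ j := by
        intro u
        have hu : u = ∑ j, u j • (Pi.single j 1 : Fin d → ℝ) := by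
          conv_lhs => rw [← Finset.univ_sum_single u]
          exact Finset.sum_congr rfl fun j _ => by
            rw [← Pi.single_smul, smul_eq_mul, mul_one]
        conv_lhs => rw [hu]
        rw [map_sum]
        exact Finset.sum_congr rfl fun j _ => by rw [f.map_smul, smul_eq_mul]
      -- basic members
      obtain ⟨l₀, hl₀⟩ := hpd
      set S₀ := ∑ j, l₀ j • K j with hS₀
      have hS₀P : S₀ ∈ P := hPD_mem hl₀
      set u₀ : Fin d → ℝ := fun j => (S₀ * K j).trace with hu₀
      have hu₀U : u₀ ∈ U := ⟨S₀, hS₀P, fun j => rfl⟩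
      -- trace of A against M := ∑ μ j • K j
      set M := ∑ j, μ j • K j with hMdef
      have htraceM : ∀ A ∈ P, (A * M).trace < f t := by
        intro A hA
        have h1 : (A * M).trace = ∑ j, μ j * (A * K j).trace :=
          aux_trace_mul_sum_smul' A K μ
        have h2 : f (fun j => (A * K j).trace) = ∑ j, (A * K j).trace * μ j := hfeq _
        have h3 := hf _ ⟨A, hA, fun j => rfl⟩
        rw [h2] at h3
        rw [h1]
        calc ∑ j, μ j * (A * K j).trace = ∑ j, (A * K j).trace * μ j :=
              Finset.sum_congr rfl fun j _ => mul_comm _ _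
          _ < f t := h3
      -- M has nonpositive quadratic form
      have hMneg : ∀ x : Fin m → ℝ, x ⬝ᵥ M *ᵥ x ≤ 0 := by
        intro x₀
        by_contra hc
        push_neg at hc
        set q := x₀ ⬝ᵥ M *ᵥ x₀ with hq
        set s : ℝ := max 0 ((f t - (S₀ * M).trace) / q) + 1 with hs
        have hs0 : 0 < s := by
          have h := le_max_left (0:ℝ) ((f t - (S₀ * M).trace) / q)
          rw [hs]
          linarith
        have hAP : S₀ + s • vecMulVec x₀ x₀ ∈ P := by
          intro x hx
          have e : x ⬝ᵥ (S₀ + s • vecMulVec x₀ x₀) *ᵥ x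
              = x ⬝ᵥ S₀ *ᵥ x + s * (x₀ ⬝ᵥ x)^2 := by
            rw [add_mulVec, dotProduct_add, smul_mulVec, dotProduct_smul,
              smul_eq_mul, aux_dot_vecMulVec]
          rw [e]
          have := hS₀P x hx
          nlinarith [sq_nonneg (x₀ ⬝ᵥ x)]
        have htr : ((S₀ + s • vecMulVec x₀ x₀) * M).trace = (S₀ * M).trace + s * q := by
          rw [add_mul, trace_add, smul_mul_assoc, trace_smul, smul_eq_mul,
            aux_trace_vecMulVec_mul]
        have hlt := htraceM _ hAP
        rw [htr] at hlt
        have hsge : (f t - (S₀ * M).trace) / q ≤ s - 1 := by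
          have := le_max_right 0 ((f t - (S₀ * M).trace) / q)
          linarith
        have : f t - (S₀ * M).trace ≤ (s - 1) * q := by
          rw [div_le_iff₀ hc] at hsge
          linarith
        nlinarith
      -- μ ≠ 0
      have hμ0 : μ ≠ 0 := by
        intro h
        have h1 := hf u₀ hu₀U
        rw [hfeq u₀, hfeq t, h] at h1
        simp at h1
      -- -M is positive semidefinite
      have hnegM : (∑ j, (-μ) j • K j).PosSemidef := by
        have he : (∑ j, (-μ) j • K j) = -M := by
          rw [hMdef, ← Finset.sum_neg_distrib]
          exact Finset.sum_congr rfl fun j _ => by simp [neg_smul]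
        rw [he]
        refine Matrix.PosSemidef.of_dotProduct_mulVec_nonneg ?_ ?_
        · show (-M)ᴴ = -M
          have hMsym : Mᵀ = M := by
            rw [hMdef, transpose_sum]
            exact Finset.sum_congr rfl fun j _ => by rw [transpose_smul, (hsymm j)]
          ext i j
          simp only [conjTranspose_apply, star_trivial, Matrix.neg_apply]
          rw [show M j i = Mᵀ i j from rfl, hMsym]
        · intro x
          have := hMneg x
          simp only [star_trivial, neg_mulVec, dotProduct_neg]
          linarith
      -- contradiction with hypothesis
      have hcon := hyp (-μ) (by simpa using hμ0) hnegM
      have hft0 : f t = ∑ j, t j * μ j := hfeq t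
      have hftneg : f t < 0 := by
        have : ∑ j, t j * (-μ) j = -∑ j, t j * μ j := by
          rw [← Finset.sum_neg_distrib]
          exact Finset.sum_congr rfl fun j _ => by simp only [Pi.neg_apply]; ring
        rw [this] at hcon
        linarith [hcon, hft0.ge, hft0.le]
      -- but f t ≥ 0 by scaling u₀
      have hscale : ∀ s : ℝ, 0 < s → s * f u₀ < f t := by
        intro s hs
        have hmem : (fun j => s * u₀ j) ∈ U := by
          refine ⟨s • S₀, ?_, fun j => ?_⟩
          · intro x hx
            have := hS₀P x hx
            have e : x ⬝ᵥ (s • S₀) *ᵥ x = s * (x ⬝ᵥ S₀ *ᵥ x) := by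
              rw [smul_mulVec, dotProduct_smul, smul_eq_mul]
            rw [e]; positivity
          · rw [smul_mul_assoc, trace_smul, smul_eq_mul]
        have h1 := hf _ hmem
        have h2 : f (fun j => s * u₀ j) = s * f u₀ := by
          rw [hfeq, hfeq]
          rw [Finset.mul_sum]
          exact Finset.sum_congr rfl fun j _ => by ring
        rw [h2] at h1
        exact h1
      have h1 := hscale 1 one_pos
      have hfu₀neg : f u₀ < 0 := by linarith
      have h2 := hscale (f t / f u₀) (div_pos_of_neg_of_neg hftneg hfu₀neg)
      rw [div_mul_cancel₀ _ (ne_of_lt hfu₀neg)] at h2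
      exact lt_irrefl _ h2
    -- from t ∈ U produce a positive definite matrix by symmetrizing
    obtain ⟨A, hAP, hAt⟩ := htU
    refine ⟨(2⁻¹ : ℝ) • (A + Aᵀ), Matrix.PosDef.of_dotProduct_mulVec_pos ?_ ?_, ?_⟩
    · show ((2⁻¹ : ℝ) • (A + Aᵀ))ᴴ = (2⁻¹ : ℝ) • (A + Aᵀ)
      ext i j
      simp only [conjTranspose_apply, Matrix.smul_apply, Matrix.add_apply, transpose_apply, star_trivial,
        smul_eq_mul]
      ring
    · intro x hx
      have e : star x ⬝ᵥ ((2⁻¹ : ℝ) • (A + Aᵀ)) *ᵥ x = x ⬝ᵥ A *ᵥ x := by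
        rw [star_trivial, smul_mulVec, dotProduct_smul, add_mulVec, dotProduct_add,
          aux_dot_transpose, smul_eq_mul]
        ring
      rw [e]
      exact hAP x hx
    · intro j
      have htrT : (Aᵀ * K j).trace = (A * K j).trace := by
        rw [← trace_transpose (Aᵀ * K j), transpose_mul, transpose_transpose, (hsymm j),
          trace_mul_comm]
      rw [smul_mul_assoc, trace_smul, add_mul, trace_add, htrT, hAt j, smul_eq_mul]
      ring
end

section
/- Let K_1, …, K_d be real symmetric m×m matrices such that some linear combination ∑_j λ_j K_j is positive definite, and let π denote the linear map sending a symmetric m×m matrix S to (trace(S·K_1),…,trace(S·K_d)) ∈ ℝ^d. Then the image of the positive semidefinite cone under π is closed and equals the topological closure of the image of the positive definite cone under π; that is, closure(π({S positive definite})) = π({S positive semidefinite}). -/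
open Matrix Filter Topology

section AuxLemmas

variable {m : ℕ}

private lemma myContEntry (i j : Fin m) :
    Continuous fun S : Matrix (Fin m) (Fin m) ℝ => S i j :=
  (continuous_apply j).comp (continuous_apply i)

private lemma myContTraceMul (K : Matrix (Fin m) (Fin m) ℝ) :
    Continuous fun S : Matrix (Fin m) (Fin m) ℝ => (S * K).trace := by
  have h : (fun S : Matrix (Fin m) (Fin m) ℝ => (S * K).trace)
      = fun S => ∑ i, ∑ j, S i j * K j i := by
    funext S; simp [Matrix.trace, Matrix.mul_apply, Matrix.diag]
  rw [h]
  exact continuous_finset_sum _ fun i _ => continuous_finset_sum _ fun j _ =>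
    (myContEntry i j).mul continuous_const

private lemma myQuadEq (S : Matrix (Fin m) (Fin m) ℝ) (x : Fin m → ℝ) :
    dotProduct (star x) (S *ᵥ x) = ∑ i, ∑ j, x i * S i j * x j := by
  simp [dotProduct, Matrix.mulVec, Finset.mul_sum, mul_assoc]

private lemma myIsClosedPSD :
    IsClosed {S : Matrix (Fin m) (Fin m) ℝ | S.PosSemidef} := by
  have h : {S : Matrix (Fin m) (Fin m) ℝ | S.PosSemidef}
      = (⋂ i, ⋂ j, {S : Matrix (Fin m) (Fin m) ℝ | S j i = S i j}) ∩
        ⋂ x : Fin m → ℝ, {S | 0 ≤ ∑ i, ∑ j, x i * S i j * x j} := by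
    ext S
    simp only [Set.mem_setOf_eq, Set.mem_inter_iff, Set.mem_iInter]
    constructor
    · intro hS
      refine ⟨fun i j => ?_, fun x => by rw [← myQuadEq]; exact hS.dotProduct_mulVec_nonneg x⟩
      have := congrFun (congrFun hS.1 i) j
      simpa [Matrix.conjTranspose_apply] using this
    · rintro ⟨h1, h2⟩
      refine Matrix.PosSemidef.of_dotProduct_mulVec_nonneg ?_ fun x => by rw [myQuadEq]; exact h2 x
      ext i j
      simpa [Matrix.conjTranspose_apply] using (h1 j i).symm
  rw [h]
  refine IsClosed.inter (isClosed_iInter fun i => isClosed_iInter fun j => ?_)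
    (isClosed_iInter fun x => ?_)
  · exact isClosed_eq (myContEntry j i) (myContEntry i j)
  · exact isClosed_le continuous_const <| continuous_finset_sum _ fun i _ =>
      continuous_finset_sum _ fun j _ => (continuous_const.mul (myContEntry i j)).mul
        continuous_const

private lemma myDiagNonneg {S : Matrix (Fin m) (Fin m) ℝ} (hS : S.PosSemidef) (i : Fin m) :
    0 ≤ S i i := by
  have := hS.dotProduct_mulVec_nonneg (Pi.single i 1)
  simpa [mulVec_single, dotProduct_single] using this

private lemma myDiagLeTrace {S : Matrix (Fin m) (Fin m) ℝ} (hS : S.PosSemidef) (i : Fin m) :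
    S i i ≤ S.trace := by
  have h : S.trace = ∑ k, S k k := rfl
  rw [h]
  exact Finset.single_le_sum (fun k _ => myDiagNonneg hS k) (Finset.mem_univ i)

private lemma myTraceNonneg {S : Matrix (Fin m) (Fin m) ℝ} (hS : S.PosSemidef) :
    0 ≤ S.trace :=
  Finset.sum_nonneg fun i _ => myDiagNonneg hS i

private lemma myQuadSingle (S : Matrix (Fin m) (Fin m) ℝ) (i j : Fin m) (ε : ℝ) :
    dotProduct (star ((Pi.single i 1 + Pi.single j ε : Fin m → ℝ)))
      (S *ᵥ (Pi.single i 1 + Pi.single j ε)) =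
      S i i + ε * S i j + ε * S j i + ε * ε * S j j := by
  have hstar : (star ((Pi.single i 1 + Pi.single j ε : Fin m → ℝ)))
      = (Pi.single i 1 + Pi.single j ε : Fin m → ℝ) := by simp
  rw [hstar, mulVec_add, dotProduct_add, add_dotProduct, add_dotProduct,
    mulVec_single, mulVec_single]
  simp only [single_dotProduct, dotProduct_single]
  simp only [mul_one, one_mul, Pi.smul_apply, op_smul_eq_mul, Matrix.col_apply]
  ring

private lemma myEntryBound {S : Matrix (Fin m) (Fin m) ℝ} (hS : S.PosSemidef) (i j : Fin m) :
    |S i j| ≤ S.trace := by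
  have hsym : S j i = S i j := by
    have := congrFun (congrFun hS.1 i) j
    simpa [Matrix.conjTranspose_apply] using this
  rcases eq_or_ne i j with rfl | hij
  · rw [abs_of_nonneg (myDiagNonneg hS i)]; exact myDiagLeTrace hS i
  · have h1 := hS.dotProduct_mulVec_nonneg (Pi.single i 1 + Pi.single j 1)
    have h2 := hS.dotProduct_mulVec_nonneg (Pi.single i 1 + Pi.single j (-1))
    rw [myQuadSingle] at h1 h2
    have htr : S i i + S j j ≤ S.trace := by
      have h : S.trace = ∑ k, S k k := rfl
      rw [h]
      calc S i i + S j j = ∑ k ∈ ({i,j} : Finset (Fin m)), S k k := by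
            rw [Finset.sum_pair hij]
        _ ≤ ∑ k, S k k := Finset.sum_le_sum_of_subset_of_nonneg (Finset.subset_univ _)
            (fun k _ _ => myDiagNonneg hS k)
    rw [abs_le]
    constructor <;> nlinarith [myDiagNonneg hS i, myDiagNonneg hS j]

open scoped MatrixOrder in
private lemma myTraceMulNonneg {S M : Matrix (Fin m) (Fin m) ℝ}
    (hS : S.PosSemidef) (hM : M.PosSemidef) : 0 ≤ (S * M).trace := by
  obtain ⟨B, rfl⟩ := CStarAlgebra.nonneg_iff_eq_star_mul_self.mp hS.nonneg
  rw [Matrix.mul_assoc, Matrix.trace_mul_comm, Matrix.star_eq_conjTranspose]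
  exact myTraceNonneg (hM.mul_mul_conjTranspose_same B)

private lemma myDiagSub (f : Fin m → ℝ) (c : ℝ) :
    diagonal f - c • (1 : Matrix (Fin m) (Fin m) ℝ) = diagonal (fun i => f i - c) := by
  ext i j
  by_cases h : i = j <;>
    simp [Matrix.sub_apply, Matrix.smul_apply, Matrix.one_apply, Matrix.diagonal_apply, h]

private lemma myPosDefSub {A : Matrix (Fin m) (Fin m) ℝ} (hA : A.PosDef) :
    ∃ c : ℝ, 0 < c ∧ (A - c • 1).PosSemidef := by
  rcases Nat.eq_zero_or_pos m with hm | hm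
  · subst hm
    exact ⟨1, one_pos, Matrix.PosSemidef.of_dotProduct_mulVec_nonneg (Subsingleton.elim _ _) fun x => by simp [dotProduct]⟩
  · haveI : Nonempty (Fin m) := Fin.pos_iff_nonempty.mp hm
    have hH := hA.1
    set U : Matrix (Fin m) (Fin m) ℝ := (hH.eigenvectorUnitary : Matrix (Fin m) (Fin m) ℝ)
      with hUdef
    set c := Finset.univ.inf' Finset.univ_nonempty hH.eigenvalues with hc
    have hcpos : 0 < c := by
      rw [hc, Finset.lt_inf'_iff]
      exact fun i _ => hA.eigenvalues_pos i
    refine ⟨c, hcpos, ?_⟩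
    have hU1 : U * star U = 1 := Unitary.mul_star_self_of_mem (hH.eigenvectorUnitary).2
    have e1 : A = U * diagonal hH.eigenvalues * star U := by
      have := hH.spectral_theorem
      simpa using this
    have e2 : U * (c • 1) * star U = c • (1 : Matrix (Fin m) (Fin m) ℝ) := by
      rw [Matrix.mul_smul, Matrix.smul_mul, Matrix.mul_one, hU1]
    have key : A - c • 1 = U * (diagonal (fun i => hH.eigenvalues i - c)) * star U := by
      rw [← myDiagSub]
      conv_lhs => rw [e1, ← e2]
      rw [← Matrix.sub_mul, ← Matrix.mul_sub]
    rw [key, Matrix.star_eq_conjTranspose]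
    refine (Matrix.posSemidef_diagonal_iff.mpr fun i => ?_).mul_mul_conjTranspose_same U
    have := Finset.inf'_le hH.eigenvalues (Finset.mem_univ i)
    rw [← hc] at this
    linarith

private lemma myTraceLB {A S : Matrix (Fin m) (Fin m) ℝ} {c : ℝ}
    (hsub : (A - c • 1).PosSemidef) (hS : S.PosSemidef) :
    c * S.trace ≤ (S * A).trace := by
  have h := myTraceMulNonneg hS hsub
  rw [Matrix.mul_sub, Matrix.trace_sub] at h
  have h2 : (S * (c • (1 : Matrix (Fin m) (Fin m) ℝ))).trace = c * S.trace := by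
    rw [Matrix.mul_smul, Matrix.mul_one, Matrix.trace_smul, smul_eq_mul]
  rw [h2] at h
  linarith

end AuxLemmas

/-- The closure of the cone of sufficient statistics: if some linear
combination of the symmetric matrices `K₁,…,K_d` is positive definite, the
image of the positive semidefinite cone under `π : S ↦ (⟨S,K₁⟩,…,⟨S,K_d⟩)` is
closed and equals the closure of the image of the positive definite cone. -/
theorem closure_sufficient_statistics_cone
    (m d : ℕ) (K : Fin d → Matrix (Fin m) (Fin m) ℝ)
    (hsymm : ∀ j, (K j).IsSymm)
    (hpd : ∃ l : Fin d → ℝ, (∑ j, l j • K j).PosDef) :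
    IsClosed ((fun S : Matrix (Fin m) (Fin m) ℝ => fun j => (S * K j).trace) ''
        {S : Matrix (Fin m) (Fin m) ℝ | S.PosSemidef}) ∧
    closure ((fun S : Matrix (Fin m) (Fin m) ℝ => fun j => (S * K j).trace) ''
        {S : Matrix (Fin m) (Fin m) ℝ | S.PosDef})
      = (fun S : Matrix (Fin m) (Fin m) ℝ => fun j => (S * K j).trace) ''
        {S : Matrix (Fin m) (Fin m) ℝ | S.PosSemidef} := by
  classical
  obtain ⟨l, hA⟩ := hpd
  set A : Matrix (Fin m) (Fin m) ℝ := ∑ j, l j • K j with hAdef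
  set f : Matrix (Fin m) (Fin m) ℝ → (Fin d → ℝ) :=
    fun S => fun j => (S * K j).trace with hfdef
  have hfcont : Continuous f := continuous_pi fun j => myContTraceMul (K j)
  have hlin : ∀ S : Matrix (Fin m) (Fin m) ℝ, ∑ j, l j * f S j = (S * A).trace := by
    intro S
    rw [hAdef, Matrix.mul_sum, Matrix.trace_sum]
    refine Finset.sum_congr rfl fun j _ => ?_
    rw [Matrix.mul_smul, Matrix.trace_smul, smul_eq_mul, hfdef]
  obtain ⟨c, hcpos, hsub⟩ := myPosDefSub hA
  have hclosed : IsClosed (f '' {S : Matrix (Fin m) (Fin m) ℝ | S.PosSemidef}) := by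
    refine IsSeqClosed.isClosed ?_
    intro y p hy hyp
    choose S hS hfS using hy
    set T : ℝ := ∑ j, l j * p j with hT
    have htend : Tendsto (fun n => ((S n) * A).trace) atTop (𝓝 T) := by
      have heq : (fun n => ((S n) * A).trace) = fun n => ∑ j, l j * y n j := by
        funext n
        rw [← hlin (S n), hfS n]
      rw [heq, hT]
      exact tendsto_finset_sum _ fun j _ =>
        ((tendsto_pi_nhds.mp hyp j).const_mul (l j))
    have hev : ∀ᶠ n in atTop, ((S n) * A).trace ≤ T + 1 :=
      htend.eventually_le_const (lt_add_one T)
    obtain ⟨N, hN⟩ := eventually_atTop.mp hev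
    set B : ℝ := (T + 1) / c with hB
    set C : Set (Matrix (Fin m) (Fin m) ℝ) :=
      {X | X.PosSemidef ∧ (X * A).trace ≤ T + 1} with hC
    have hCclosed : IsClosed C :=
      myIsClosedPSD.inter (isClosed_le (myContTraceMul A) continuous_const)
    have hCsub : C ⊆ Set.univ.pi fun _ : Fin m =>
        Set.univ.pi fun _ : Fin m => Set.Icc (-B) B := by
      rintro X ⟨hX, hXle⟩
      have htr : X.trace ≤ B := by
        rw [hB, le_div_iff₀ hcpos, mul_comm]
        exact le_trans (myTraceLB hsub hX) hXle
      intro i _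
      intro j _
      have := le_trans (myEntryBound hX i j) htr
      rw [abs_le] at this
      exact ⟨this.1, this.2⟩
    have hCcomp : IsCompact C :=
      (isCompact_univ_pi fun _ => isCompact_univ_pi fun _ => isCompact_Icc).of_isClosed_subset
        hCclosed hCsub
    have hu : ∀ n : ℕ, S (n + N) ∈ C := by
      intro n
      exact ⟨hS (n + N), hN (n + N) (Nat.le_add_left N n)⟩
    haveI : FirstCountableTopology (Matrix (Fin m) (Fin m) ℝ) :=
      inferInstanceAs (FirstCountableTopology (Fin m → Fin m → ℝ))
    obtain ⟨X, hXC, φ, hφ, hconv⟩ := hCcomp.tendsto_subseq hu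
    have h1 : Tendsto (fun k => f (S (φ k + N))) atTop (𝓝 (f X)) :=
      (hfcont.tendsto X).comp hconv
    have h2 : Tendsto (fun k => y (φ k + N)) atTop (𝓝 p) :=
      hyp.comp ((tendsto_add_atTop_nat N).comp hφ.tendsto_atTop)
    have heq2 : (fun k => f (S (φ k + N))) = fun k => y (φ k + N) := by
      funext k; exact hfS (φ k + N)
    rw [heq2] at h1
    exact ⟨X, hXC.1, (tendsto_nhds_unique h2 h1).symm⟩
  refine ⟨hclosed, Set.Subset.antisymm
    (closure_minimal (Set.image_mono fun S hS => hS.posSemidef) hclosed) ?_⟩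
  rintro _ ⟨S, hS, rfl⟩
  have hmem : ∀ n : ℕ,
      f (S + ((1 : ℝ) / (n + 1)) • 1) ∈ f '' {X : Matrix (Fin m) (Fin m) ℝ | X.PosDef} := by
    intro n
    refine ⟨S + ((1 : ℝ) / (n + 1)) • 1, ?_, rfl⟩
    have hpos : (0 : ℝ) < (1 : ℝ) / (n + 1) := by positivity
    have h1 : (((1 : ℝ) / (n + 1)) • (1 : Matrix (Fin m) (Fin m) ℝ)).PosDef := by
      rw [Matrix.smul_one_eq_diagonal]
      exact Matrix.PosDef.diagonal fun _ => hpos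
    exact Matrix.PosDef.posSemidef_add hS h1
  have htend : Tendsto (fun n : ℕ => f (S + ((1 : ℝ) / (n + 1)) • 1)) atTop (𝓝 (f S)) := by
    refine (hfcont.tendsto S).comp ?_
    have h0 : Tendsto (fun n : ℕ => (1 : ℝ) / (n + 1)) atTop (𝓝 0) :=
      tendsto_one_div_add_atTop_nhds_zero_nat
    have := tendsto_const_nhds (x := S) (f := atTop (α := ℕ)) |>.add
      (h0.smul_const (1 : Matrix (Fin m) (Fin m) ℝ))
    simpa using this
  exact mem_closure_of_tendsto htend (Eventually.of_forall hmem)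
end

section
/- Let L be a linear subspace of real symmetric m×m matrices, let S be a real symmetric m×m matrix, and let K̂ ∈ L be positive definite. Then K̂ maximizes the function K ↦ log det K − trace(S·K) over the set {K ∈ L : K positive definite} if and only if trace((K̂^{-1} − S)·K) = 0 for all K ∈ L, i.e. if and only if trace(K̂^{-1}·K_j) = trace(S·K_j) for every member K_j of a basis of L. -/
open Matrix BigOperators Finset

variable {m : ℕ}

-- scalar log lower bound
lemma log_ge_aux {x : ℝ} (hx : -(1/2) ≤ x) : x - 2*x^2 ≤ Real.log (1+x) := by
  have h1 : (0:ℝ) < 1 + x := by linarith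
  have h2 := Real.one_sub_inv_le_log_of_pos h1
  have h3 : (1+x) * (1+x)⁻¹ = 1 := mul_inv_cancel₀ h1.ne'
  nlinarith [sq_nonneg x, mul_pos h1 h1]

lemma isHermitian_of_isSymm {A : Matrix (Fin m) (Fin m) ℝ} (h : A.IsSymm) : A.IsHermitian := by
  unfold Matrix.IsHermitian
  ext i j
  simpa [Matrix.conjTranspose_apply] using congrFun (congrFun h i) j

lemma trace_eq_sum_eigenvalues {A : Matrix (Fin m) (Fin m) ℝ} (hA : A.IsHermitian) :
    A.trace = ∑ i, hA.eigenvalues i := by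
  conv_lhs => rw [hA.spectral_theorem, Unitary.conjStarAlgAut_apply]
  rw [Matrix.trace_mul_cycle]
  have h1 : (star (hA.eigenvectorUnitary : Matrix (Fin m) (Fin m) ℝ)) *
      (hA.eigenvectorUnitary : Matrix (Fin m) (Fin m) ℝ) = 1 :=
    Matrix.mem_unitaryGroup_iff'.mp (hA.eigenvectorUnitary).2
  rw [h1, Matrix.one_mul, Matrix.trace_diagonal]
  simp [RCLike.ofReal_real_eq_id]

-- Gibbs inequality: log det B ≤ trace B − m for positive definite B
lemma log_det_le_trace {B : Matrix (Fin m) (Fin m) ℝ} (hB : B.PosDef) :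
    Real.log B.det ≤ B.trace - m := by
  have hdet : B.det = ∏ i, hB.1.eigenvalues i := by
    simpa [RCLike.ofReal_real_eq_id] using hB.1.det_eq_prod_eigenvalues
  have hpos : ∀ i ∈ Finset.univ, hB.1.eigenvalues i ≠ 0 :=
    fun i _ => (hB.eigenvalues_pos i).ne'
  rw [hdet, Real.log_prod hpos, trace_eq_sum_eigenvalues hB.1]
  have : ∀ i ∈ Finset.univ, Real.log (hB.1.eigenvalues i) ≤ hB.1.eigenvalues i - 1 :=
    fun i _ => Real.log_le_sub_one_of_pos (hB.eigenvalues_pos i)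
  calc ∑ i, Real.log (hB.1.eigenvalues i) ≤ ∑ i, (hB.1.eigenvalues i - 1) :=
        Finset.sum_le_sum this
    _ = (∑ i, hB.1.eigenvalues i) - m := by
        rw [Finset.sum_sub_distrib]; simp

-- conjugation preserves positive definiteness
lemma posDef_conj {A P : Matrix (Fin m) (Fin m) ℝ} (hA : A.PosDef) (hP : IsUnit P.det) :
    (Pᴴ * A * P).PosDef := by
  refine Matrix.PosDef.of_dotProduct_mulVec_pos (Matrix.isHermitian_conjTranspose_mul_mul P hA.1) fun x hx => ?_
  have hinj : Function.Injective P.mulVec := Matrix.mulVec_injective_iff_isUnit.2 ((Matrix.isUnit_iff_isUnit_det P).2 hP)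
  have hPx : P *ᵥ x ≠ 0 := fun h => hx (hinj (h.trans (Matrix.mulVec_zero P).symm))
  simpa only [star_mulVec, Matrix.dotProduct_mulVec, Matrix.vecMul_vecMul]
    using hA.dotProduct_mulVec_pos hPx

lemma one_add_smul_decomp {A : Matrix (Fin m) (Fin m) ℝ} (hA : A.IsHermitian) (t : ℝ) :
    (1 : Matrix (Fin m) (Fin m) ℝ) + t • A =
      (hA.eigenvectorUnitary : Matrix (Fin m) (Fin m) ℝ) *
        Matrix.diagonal (fun i => 1 + t * hA.eigenvalues i) *
        star (hA.eigenvectorUnitary : Matrix (Fin m) (Fin m) ℝ) := by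
  set U := (hA.eigenvectorUnitary : Matrix (Fin m) (Fin m) ℝ)
  have hU : U * star U = 1 := Matrix.mem_unitaryGroup_iff.mp (hA.eigenvectorUnitary).2
  have hD : Matrix.diagonal (fun i => 1 + t * hA.eigenvalues i) =
      1 + t • Matrix.diagonal (RCLike.ofReal ∘ hA.eigenvalues) := by
    ext i j
    rcases eq_or_ne i j with h | h <;>
      simp [h, Matrix.diagonal_apply, Matrix.one_apply, RCLike.ofReal_real_eq_id]
  rw [hD, Matrix.mul_add, Matrix.add_mul, Matrix.mul_one, hU,
    Matrix.mul_smul, Matrix.smul_mul]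
  conv_lhs => rw [hA.spectral_theorem, Unitary.conjStarAlgAut_apply]

lemma det_one_add_smul_eig {A : Matrix (Fin m) (Fin m) ℝ} (hA : A.IsHermitian) (t : ℝ) :
    ((1 : Matrix (Fin m) (Fin m) ℝ) + t • A).det = ∏ i, (1 + t * hA.eigenvalues i) := by
  rw [one_add_smul_decomp hA t, Matrix.det_mul_right_comm]
  have hU : (hA.eigenvectorUnitary : Matrix (Fin m) (Fin m) ℝ) *
      star (hA.eigenvectorUnitary : Matrix (Fin m) (Fin m) ℝ) = 1 :=
    Matrix.mem_unitaryGroup_iff.mp (hA.eigenvectorUnitary).2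
  rw [hU, Matrix.one_mul, Matrix.det_diagonal]

lemma posDef_one_add_smul_eig {A : Matrix (Fin m) (Fin m) ℝ} (hA : A.IsHermitian) (t : ℝ)
    (h : ∀ i, 0 < 1 + t * hA.eigenvalues i) :
    ((1 : Matrix (Fin m) (Fin m) ℝ) + t • A).PosDef := by
  rw [one_add_smul_decomp hA t]
  set U := (hA.eigenvectorUnitary : Matrix (Fin m) (Fin m) ℝ)
  have hUdet : IsUnit (star U).det := by
    have hU : U * star U = 1 := Matrix.mem_unitaryGroup_iff.mp (hA.eigenvectorUnitary).2
    have : U.det * (star U).det = 1 := by rw [← Matrix.det_mul, hU, Matrix.det_one]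
    exact IsUnit.of_mul_eq_one _ ((mul_comm _ _).trans this)
  have hD : (Matrix.diagonal (fun i => 1 + t * hA.eigenvalues i)).PosDef :=
    Matrix.PosDef.diagonal h
  have := posDef_conj hD hUdet
  simpa only [Matrix.star_eq_conjTranspose, Matrix.conjTranspose_conjTranspose] using this

open scoped MatrixOrder in
lemma exists_psd_sqrt_aux {A : Matrix (Fin m) (Fin m) ℝ} (hA : A.PosSemidef) :
    ∃ Q : Matrix (Fin m) (Fin m) ℝ, Q.PosSemidef ∧ Q * Q = A :=
  ⟨CFC.sqrt A, (CFC.sqrt_nonneg _).posSemidef, CFC.sqrt_mul_sqrt_self _ hA.nonneg⟩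

lemma log_det_le_key {Khat K : Matrix (Fin m) (Fin m) ℝ} (hKhat : Khat.PosDef)
    (hK : K.PosDef) :
    Real.log K.det ≤ Real.log Khat.det + (Khat⁻¹ * K).trace - m := by
  have hInv : Khat⁻¹.PosDef := hKhat.inv
  obtain ⟨Q, hQpsd, hQQ⟩ : ∃ Q : Matrix (Fin m) (Fin m) ℝ, Q.PosSemidef ∧ Q * Q = Khat⁻¹ :=
    exists_psd_sqrt_aux hInv.posSemidef
  have hQH : Qᴴ = Q := hQpsd.1
  have hdetQQ : Q.det * Q.det = Khat⁻¹.det := by rw [← Matrix.det_mul, hQQ]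
  have hdetInv : 0 < Khat⁻¹.det := hInv.det_pos
  have hdetQ : IsUnit Q.det := by
    have : Q.det ≠ 0 := fun h => hdetInv.ne' (by rw [← hdetQQ, h, mul_zero])
    exact isUnit_iff_ne_zero.mpr this
  have hB : (Q * K * Q).PosDef := by
    have := posDef_conj hK hdetQ
    rwa [hQH] at this
  have htr : (Q * K * Q).trace = (Khat⁻¹ * K).trace := by
    rw [Matrix.trace_mul_comm, ← Matrix.mul_assoc, hQQ]
  have hdetB : (Q * K * Q).det = Khat⁻¹.det * K.det := by
    rw [Matrix.det_mul, Matrix.det_mul, ← hdetQQ]; ring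
  have := log_det_le_trace hB
  rw [hdetB, htr, Real.log_mul hdetInv.ne' hK.det_pos.ne',
    Matrix.det_nonsing_inv, Ring.inverse_eq_inv', Real.log_inv] at this
  linarith

set_option maxHeartbeats 1000000 in
lemma forward_aux {Khat K S : Matrix (Fin m) (Fin m) ℝ} (hKhat : Khat.PosDef)
    (hKsymm : K.IsSymm)
    (hmax : ∀ t : ℝ, (Khat + t • K).PosDef →
      Real.log (Khat + t • K).det - (S * (Khat + t • K)).trace ≤
        Real.log Khat.det - (S * Khat).trace) :
    ((Khat⁻¹ - S) * K).trace = 0 := by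
  classical
  have hInv : Khat⁻¹.PosDef := hKhat.inv
  obtain ⟨Q, hQpsd, hQQ⟩ : ∃ Q : Matrix (Fin m) (Fin m) ℝ, Q.PosSemidef ∧ Q * Q = Khat⁻¹ :=
    exists_psd_sqrt_aux hInv.posSemidef
  have hQH : Qᴴ = Q := hQpsd.1
  have hdetQQ : Q.det * Q.det = Khat⁻¹.det := by rw [← Matrix.det_mul, hQQ]
  have hdetInv : 0 < Khat⁻¹.det := hInv.det_pos
  have hdetQ : IsUnit Q.det := by
    have : Q.det ≠ 0 := fun h => hdetInv.ne' (by rw [← hdetQQ, h, mul_zero])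
    exact isUnit_iff_ne_zero.mpr this
  set A := Q * K * Q with hAdef
  have hAH : A.IsHermitian := by
    have := Matrix.isHermitian_conjTranspose_mul_mul Q (isHermitian_of_isSymm hKsymm)
    rwa [hQH] at this
  set μ := hAH.eigenvalues with hμdef
  set T := ∑ i, μ i ^ 2 with hTdef
  have hT : 0 ≤ T := Finset.sum_nonneg fun i _ => sq_nonneg _
  have hsum : ∑ i, μ i = (Khat⁻¹ * K).trace := by
    rw [← trace_eq_sum_eigenvalues hAH, hAdef, Matrix.trace_mul_comm,
      ← Matrix.mul_assoc, hQQ]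
  -- decomposition of Khat + t • K
  have hQinvH : (Q⁻¹)ᴴ = Q⁻¹ := by rw [Matrix.conjTranspose_nonsing_inv, hQH]
  have hQinvQinv : Q⁻¹ * Q⁻¹ = Khat := by
    rw [← Matrix.mul_inv_rev, hQQ,
      Matrix.nonsing_inv_nonsing_inv _ (isUnit_iff_ne_zero.mpr hKhat.det_pos.ne')]
  have hQinvA : Q⁻¹ * A * Q⁻¹ = K := by
    rw [hAdef]
    calc Q⁻¹ * (Q * K * Q) * Q⁻¹
        = (Q⁻¹ * Q) * K * (Q * Q⁻¹) := by simp only [Matrix.mul_assoc]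
      _ = K := by
          rw [Matrix.nonsing_inv_mul _ hdetQ, Matrix.mul_nonsing_inv _ hdetQ,
            Matrix.one_mul, Matrix.mul_one]
  have hdetQinv : IsUnit (Q⁻¹).det := by
    rw [Matrix.det_nonsing_inv, Ring.inverse_eq_inv']
    exact isUnit_iff_ne_zero.mpr (inv_ne_zero (isUnit_iff_ne_zero.mp hdetQ))
  have hM : ∀ t : ℝ, Khat + t • K = (Q⁻¹)ᴴ * (1 + t • A) * Q⁻¹ := by
    intro t
    rw [hQinvH, Matrix.mul_add, Matrix.add_mul, Matrix.mul_one, hQinvQinv,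
      Matrix.mul_smul, Matrix.smul_mul, hQinvA]
  set c := (Khat⁻¹ * K).trace - (S * K).trace with hcdef
  have hcgoal : ((Khat⁻¹ - S) * K).trace = c := by
    rw [Matrix.sub_mul, Matrix.trace_sub]
  by_contra hc0
  rw [hcgoal] at hc0
  have habs : 0 < |c| := abs_pos.mpr hc0
  set δ := min (1 / (2 * (Real.sqrt T + 1))) (|c| / (2 * (2 * T + 1))) with hδdef
  have hsT : 0 ≤ Real.sqrt T := Real.sqrt_nonneg T
  have hδpos : 0 < δ := lt_min (by positivity) (by positivity)
  have hμbd : ∀ i, |μ i| ≤ Real.sqrt T := by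
    intro i
    rw [← Real.sqrt_sq_eq_abs]
    exact Real.sqrt_le_sqrt (Finset.single_le_sum (fun j _ => sq_nonneg (μ j))
      (Finset.mem_univ i))
  have main : ∀ t : ℝ, |t| = δ → t * c ≤ 2 * δ ^ 2 * T := by
    intro t ht
    have htμ : ∀ i, |t * μ i| ≤ 1 / 2 := by
      intro i
      rw [abs_mul, ht]
      calc δ * |μ i| ≤ (1 / (2 * (Real.sqrt T + 1))) * (Real.sqrt T + 1) :=
            mul_le_mul (min_le_left _ _) (by linarith [hμbd i]) (abs_nonneg _)
              (by positivity)
        _ = 1 / 2 := by field_simp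
    have hpos : ∀ i, 0 < 1 + t * μ i := by
      intro i
      have := abs_le.mp (htμ i)
      linarith [this.1]
    have hMPD : (Khat + t • K).PosDef := by
      rw [hM t]
      exact posDef_conj (posDef_one_add_smul_eig hAH t hpos) hdetQinv
    have hprodpos : ∀ i ∈ Finset.univ, (1 + t * μ i) ≠ 0 := fun i _ => (hpos i).ne'
    have hdet : (Khat + t • K).det = Khat.det * ∏ i, (1 + t * μ i) := by
      rw [hM t, Matrix.det_mul, Matrix.det_mul, det_one_add_smul_eig hAH t,
        Matrix.det_conjTranspose, star_trivial]
      rw [mul_comm (Q⁻¹).det _, mul_assoc, ← Matrix.det_mul, hQinvQinv]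
      ring
    have hlog : Real.log (Khat + t • K).det =
        Real.log Khat.det + ∑ i, Real.log (1 + t * μ i) := by
      rw [hdet, Real.log_mul hKhat.det_pos.ne'
        (Finset.prod_ne_zero_iff.mpr hprodpos), Real.log_prod hprodpos]
    have htrS : (S * (Khat + t • K)).trace = (S * Khat).trace + t * (S * K).trace := by
      rw [Matrix.mul_add, Matrix.trace_add, Matrix.mul_smul, Matrix.trace_smul,
        smul_eq_mul]
    have h1 := hmax t hMPD
    rw [hlog, htrS] at h1
    have h2 : ∑ i, Real.log (1 + t * μ i) ≤ t * (S * K).trace := by linarith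
    have h3 : t * (∑ i, μ i) - 2 * δ ^ 2 * T ≤ ∑ i, Real.log (1 + t * μ i) := by
      have hterm : ∀ i ∈ Finset.univ,
          t * μ i - 2 * δ ^ 2 * μ i ^ 2 ≤ Real.log (1 + t * μ i) := by
        intro i _
        have hx : -(1/2) ≤ t * μ i := (abs_le.mp (htμ i)).1
        have := log_ge_aux hx
        have heq : (t * μ i) ^ 2 = δ ^ 2 * μ i ^ 2 := by
          rw [mul_pow, ← ht, sq_abs]
        nlinarith [this]
      calc t * (∑ i, μ i) - 2 * δ ^ 2 * T
          = ∑ i, (t * μ i - 2 * δ ^ 2 * μ i ^ 2) := by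
            rw [Finset.sum_sub_distrib, ← Finset.mul_sum, ← Finset.mul_sum]
        _ ≤ ∑ i, Real.log (1 + t * μ i) := Finset.sum_le_sum hterm
    rw [hsum] at h3
    rw [hcdef]
    nlinarith [h2, h3]
  have hδ2 : δ * (2 * (2 * T + 1)) ≤ |c| := by
    have := min_le_right (1 / (2 * (Real.sqrt T + 1))) (|c| / (2 * (2 * T + 1)))
    rw [← hδdef] at this
    rw [← le_div_iff₀ (by positivity : (0:ℝ) < 2 * (2 * T + 1))]
    exact this
  have ha := main δ (abs_of_pos hδpos)
  have hb := main (-δ) (by rw [abs_neg, abs_of_pos hδpos])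
  have hkey : δ * |c| ≤ 2 * δ ^ 2 * T := by
    rcases le_or_gt 0 c with h | h
    · rw [abs_of_nonneg h]; exact ha
    · rw [abs_of_neg h]; calc δ * -c = -δ * c := by ring
        _ ≤ 2 * δ ^ 2 * T := hb
  nlinarith [mul_le_mul_of_nonneg_left hδ2 hδpos.le, hkey, mul_pos hδpos hδpos, hT]

/-- Characterization of the maximum likelihood estimate: a positive definite
matrix `K̂` in the linear space `L` of symmetric matrices maximizes
`K ↦ log det K − trace(S·K)` over the positive definite matrices in `L` if and
only if `trace((K̂⁻¹ − S)·K) = 0` for all `K ∈ L`. -/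
theorem mle_iff_trace_equations
    (m : ℕ) (L : Submodule ℝ (Matrix (Fin m) (Fin m) ℝ))
    (hLsymm : ∀ K ∈ L, (K : Matrix (Fin m) (Fin m) ℝ).IsSymm)
    (S : Matrix (Fin m) (Fin m) ℝ) (hS : S.IsSymm)
    (Khat : Matrix (Fin m) (Fin m) ℝ) (hKhatL : Khat ∈ L) (hKhat : Khat.PosDef) :
    (∀ K ∈ L, Matrix.PosDef K →
        Real.log K.det - (S * K).trace ≤ Real.log Khat.det - (S * Khat).trace) ↔
      (∀ K ∈ L, ((Khat⁻¹ - S) * K).trace = 0) := by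
  constructor
  · intro hmax K hKL
    apply forward_aux hKhat (hLsymm K hKL)
    intro t hPD
    exact hmax (Khat + t • K) (L.add_mem hKhatL (L.smul_mem t hKL)) hPD
  · intro heq K hKL hKPD
    have h1 : (Khat⁻¹ * K).trace = (S * K).trace := by
      have := heq K hKL; rw [Matrix.sub_mul, Matrix.trace_sub] at this; linarith
    have h2 : (S * Khat).trace = (m : ℝ) := by
      have := heq Khat hKhatL
      rw [Matrix.sub_mul, Matrix.trace_sub,
        Matrix.nonsing_inv_mul _ (isUnit_iff_ne_zero.mpr hKhat.det_pos.ne'),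
        Matrix.trace_one] at this
      simp only [Fintype.card_fin] at this
      linarith
    have h3 := log_det_le_key hKhat hKPD
    rw [h1] at h3
    linarith
end

section
/- Let L be a linear subspace of real symmetric m×m matrices and let K ∈ L be positive definite. Then K^{-1} is the unique maximizer of the determinant over the spectrahedron {Σ positive definite : trace(Σ·K') = trace(K^{-1}·K') for all K' ∈ L}; that is, for every positive definite Σ with trace(Σ·K') = trace(K^{-1}·K') for all K' ∈ L and Σ ≠ K^{-1}, one has det Σ < det K^{-1}. -/
open Matrix Finset

lemma posDef_mul_mul {n : ℕ} {S A : Matrix (Fin n) (Fin n) ℝ}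
    (hS : S.IsHermitian) (hSu : IsUnit S) (hA : A.PosDef) : (S * A * S).PosDef := by
  have hST : Sᵀ = S := hS
  refine Matrix.posDef_iff_dotProduct_mulVec.mpr ⟨?_, ?_⟩
  · show (S * A * S)ᴴ = _
    have hAT : Aᵀ = A := hA.1
    simp [Matrix.conjTranspose_mul, mul_assoc, hST, hAT]
  · intro x hx
    have hSx : S *ᵥ x ≠ 0 := fun h => hx <| by
      have := Matrix.mulVec_injective_iff_isUnit.mpr hSu (by simp [h] : S *ᵥ x = S *ᵥ 0)
      exact this
    have := hA.dotProduct_mulVec_pos hSx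
    have key : star x ⬝ᵥ ((S * A * S) *ᵥ x) = star (S *ᵥ x) ⬝ᵥ (A *ᵥ (S *ᵥ x)) := by
      simp only [star_trivial, ← Matrix.mulVec_mulVec]
      rw [Matrix.dotProduct_mulVec x S, ← Matrix.mulVec_transpose, hST]
    rw [key]; exact this

theorem key_det_lt {n : ℕ} {B : Matrix (Fin n) (Fin n) ℝ} (hB : B.PosDef)
    (htr : B.trace = n) (hne : B ≠ 1) : B.det < 1 := by
  set lam := hB.1.eigenvalues with hlam
  have hpos : ∀ i, 0 < lam i := hB.eigenvalues_pos
  have hdet : B.det = ∏ i, lam i := by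
    simpa using hB.1.det_eq_prod_eigenvalues
  have hU := hB.1.spectral_theorem
  simp only [Unitary.conjStarAlgAut_apply, Unitary.coe_star] at hU
  have htrace : B.trace = ∑ i, lam i := by
    calc B.trace = Matrix.trace ((hB.1.eigenvectorUnitary : Matrix (Fin n) (Fin n) ℝ) *
        Matrix.diagonal (RCLike.ofReal ∘ lam) * (star (hB.1.eigenvectorUnitary : Matrix (Fin n) (Fin n) ℝ))) := by
          rw [← hU]
      _ = Matrix.trace ((star (hB.1.eigenvectorUnitary : Matrix (Fin n) (Fin n) ℝ)) *
          (hB.1.eigenvectorUnitary : Matrix (Fin n) (Fin n) ℝ) *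
          Matrix.diagonal (RCLike.ofReal ∘ lam)) := by
          rw [Matrix.trace_mul_cycle]
      _ = ∑ i, lam i := by
          rw [Matrix.mem_unitaryGroup_iff'.mp hB.1.eigenvectorUnitary.2, one_mul,
            Matrix.trace_diagonal]
          simp
  have hnot : ¬ ∀ i, lam i = 1 := by
    intro hall
    apply hne
    have hD : Matrix.diagonal (RCLike.ofReal ∘ lam) = (1 : Matrix (Fin n) (Fin n) ℝ) := by
      rw [show (RCLike.ofReal ∘ lam : Fin n → ℝ) = (1 : Fin n → ℝ) from
        funext fun i => by simp [hall i]]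
      exact Matrix.diagonal_one
    rw [hU, hD, mul_one, Matrix.mem_unitaryGroup_iff.mp hB.1.eigenvectorUnitary.2]
  push_neg at hnot
  obtain ⟨i₀, hi₀⟩ := hnot
  have hsum : ∑ i, Real.log (lam i) < 0 := by
    have h1 : ∑ i, Real.log (lam i) < ∑ i, (lam i - 1) := by
      apply Finset.sum_lt_sum
      · exact fun i _ => Real.log_le_sub_one_of_pos (hpos i)
      · exact ⟨i₀, Finset.mem_univ _, Real.log_lt_sub_one_of_pos (hpos i₀) hi₀⟩
    have h2 : ∑ i, (lam i - 1) = 0 := by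
      rw [Finset.sum_sub_distrib]
      simp [← htrace, htr]
    linarith
  have : B.det = Real.exp (∑ i, Real.log (lam i)) := by
    rw [hdet, Real.exp_sum]
    exact (Finset.prod_congr rfl fun i _ => (Real.exp_log (hpos i)).symm)
  rw [this]
  calc Real.exp (∑ i, Real.log (lam i)) < Real.exp 0 := Real.exp_lt_exp.mpr hsum
    _ = 1 := Real.exp_zero

/-- For a positive definite matrix `K` in a linear space `L` of symmetric
matrices, `K⁻¹` is the unique maximizer of the determinant over the
spectrahedron of positive definite matrices with the same sufficient
statistics as `K⁻¹`: any other such matrix has strictly smaller determinant. -/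
theorem inverse_is_analytic_center
    (m : ℕ) (L : Submodule ℝ (Matrix (Fin m) (Fin m) ℝ))
    (hLsymm : ∀ K ∈ L, (K : Matrix (Fin m) (Fin m) ℝ).IsSymm)
    (K : Matrix (Fin m) (Fin m) ℝ) (hKL : K ∈ L) (hK : K.PosDef) :
    ∀ Sig : Matrix (Fin m) (Fin m) ℝ, Sig.PosDef →
      (∀ K' ∈ L, (Sig * K').trace = (K⁻¹ * K').trace) →
      Sig ≠ K⁻¹ → Sig.det < (K⁻¹).det := by
  intro Sig hSig hfib hne
  open scoped MatrixOrder in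
  obtain ⟨S, hSher, hSS⟩ : ∃ S : Matrix (Fin m) (Fin m) ℝ, S.IsHermitian ∧ S * S = K :=
    ⟨CFC.sqrt K, (CFC.sqrt_nonneg K).posSemidef.1, CFC.sqrt_mul_sqrt_self K hK.posSemidef.nonneg⟩
  have hdetS : S.det * S.det = K.det := by rw [← Matrix.det_mul, hSS]
  have hKd : 0 < K.det := hK.det_pos
  have hSdet : S.det ≠ 0 := fun h => by rw [h, mul_zero] at hdetS; exact hKd.ne' hdetS.symm
  have hSu : IsUnit S := (Matrix.isUnit_iff_isUnit_det S).mpr hSdet.isUnit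
  have hB : (S * Sig * S).PosDef := posDef_mul_mul hSher hSu hSig
  have hKinvK : K⁻¹ * K = 1 := Matrix.nonsing_inv_mul K hKd.ne'.isUnit
  have htr : (S * Sig * S).trace = m := by
    rw [Matrix.trace_mul_comm, ← mul_assoc, hSS, Matrix.trace_mul_comm, hfib K hKL, hKinvK]
    simp
  have hBne : S * Sig * S ≠ 1 := by
    intro h1
    apply hne
    have h2 : S⁻¹ * (S * Sig * S) * S⁻¹ = S⁻¹ * 1 * S⁻¹ := by rw [h1]
    rw [mul_one, ← mul_assoc, ← mul_assoc, Matrix.nonsing_inv_mul S hSdet.isUnit, one_mul,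
      mul_assoc, Matrix.mul_nonsing_inv S hSdet.isUnit, mul_one] at h2
    rw [h2, ← Matrix.mul_inv_rev, hSS]
  have hlt : (S * Sig * S).det < 1 := key_det_lt hB htr hBne
  have hdetB : (S * Sig * S).det = K.det * Sig.det := by
    rw [Matrix.det_mul, Matrix.det_mul]; ring_nf; rw [sq, hdetS]; ring
  rw [Matrix.det_nonsing_inv, Ring.inverse_eq_inv', show (K.det)⁻¹ = 1 / K.det by ring,
    lt_div_iff₀ hKd]
  rw [hdetB] at hlt
  linarith
end

section
/- Let A be a real d×m matrix whose row space contains a vector with all coordinates strictly positive, and let t ∈ ℝ^d be such that the fiber P = {x ∈ ℝ^m : x_i > 0 for all i, Ax = t} is non-empty. Then there exists a unique point x̂ ∈ P such that the reciprocal vector (1/x̂_1, …, 1/x̂_m) lies in the row space of A; moreover this x̂ is the unique maximizer of the product x_1 x_2 ⋯ x_m over P, i.e. for every x ∈ P with x ≠ x̂ one has x_1⋯x_m < x̂_1⋯x̂_m. (x̂ is the analytic center of the polytope P.) -/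
open Matrix

lemma mem_row_space_of_orth {d m : ℕ} (A : Matrix (Fin d) (Fin m) ℝ) (w : Fin m → ℝ)
    (h : ∀ v : Fin m → ℝ, A.mulVec v = 0 → w ⬝ᵥ v = 0) :
    ∃ y : Fin d → ℝ, w = Matrix.vecMul y A := by
  let R : Submodule ℝ (EuclideanSpace ℝ (Fin m)) :=
    LinearMap.range ((WithLp.linearEquiv 2 ℝ (Fin m → ℝ)).symm.toLinearMap ∘ₗ A.vecMulLinear)
  have key : ∀ a b : Fin m → ℝ,
      (inner ℝ ((WithLp.equiv 2 _).symm a) ((WithLp.equiv 2 _).symm b) : ℝ) = a ⬝ᵥ b := by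
    intro a b
    simp [PiLp.inner_apply, dotProduct, RCLike.inner_apply, mul_comm]
  have hw : ((WithLp.equiv 2 _).symm w : EuclideanSpace ℝ (Fin m)) ∈ Rᗮᗮ := by
    rw [Submodule.mem_orthogonal]
    intro v hv
    have hAv : A.mulVec v = 0 := by
      funext j
      have h2 := (Submodule.mem_orthogonal' R v).mp hv ((WithLp.linearEquiv 2 ℝ (Fin m → ℝ)).symm (A.vecMulLinear (Pi.single j 1)))
        ⟨Pi.single j 1, rfl⟩
      simpa [PiLp.inner_apply, RCLike.inner_apply, Matrix.vecMulLinear_apply,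
        Matrix.single_one_vecMul, Matrix.mulVec, dotProduct, mul_comm] using h2
    have h4 := h ((WithLp.equiv 2 _) v) hAv
    have h5 : (inner ℝ v ((WithLp.equiv 2 _).symm w) : ℝ)
        = inner ℝ ((WithLp.equiv 2 _).symm w : EuclideanSpace ℝ (Fin m)) v := real_inner_comm _ _
    have h6 := key w ((WithLp.equiv 2 _) v)
    simp only [Equiv.symm_apply_apply] at h6
    rw [h5, h6]; exact h4
  rw [Submodule.orthogonal_orthogonal] at hw
  obtain ⟨y, hy⟩ := hw
  exact ⟨y, by simpa [Matrix.vecMulLinear_apply] using congrArg (WithLp.equiv 2 _) hy.symm⟩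

/-- strict AM-GM for midpoints of products -/
lemma prod_mid_sq {m : ℕ} (x y : Fin m → ℝ) (hx : ∀ i, 0 < x i) (hy : ∀ i, 0 < y i)
    (hxy : x ≠ y) :
    (∏ i, x i) * (∏ i, y i) < (∏ i, (x i + y i) / 2) ^ 2 := by
  have h1 : (∏ i, x i) * (∏ i, y i) = ∏ i, x i * y i := (Finset.prod_mul_distrib).symm
  have h2 : (∏ i, (x i + y i) / 2) ^ 2 = ∏ i, ((x i + y i) / 2) ^ 2 := by
    rw [← Finset.prod_pow]
  rw [h1, h2]
  obtain ⟨i0, hi0⟩ : ∃ i, x i ≠ y i := by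
    by_contra hc; push_neg at hc; exact hxy (funext hc)
  refine Finset.prod_lt_prod (fun i _ => mul_pos (hx i) (hy i))
    (fun i _ => by nlinarith [sq_nonneg (x i - y i)]) ⟨i0, Finset.mem_univ i0, ?_⟩
  have hne0 : (x i0 - y i0) ^ 2 ≠ 0 := pow_ne_zero _ (sub_ne_zero.mpr hi0)
  have : (0:ℝ) < (x i0 - y i0) ^ 2 := lt_of_le_of_ne (sq_nonneg _) (Ne.symm hne0)
  nlinarith

set_option maxHeartbeats 1000000 in
/-- Analytic center of the fiber polytope: if the row space of `A` contains a
strictly positive vector and the fiber `P = {x > 0 : Ax = t}` is non-empty,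
then there is a unique point `x̂ ∈ P` whose coordinatewise reciprocal lies in
the row space of `A`, and this `x̂` is the unique maximizer of the product of
the coordinates over `P`. -/
theorem analytic_center_of_fiber
    (d m : ℕ) (A : Matrix (Fin d) (Fin m) ℝ)
    (hrow : ∃ y : Fin d → ℝ, ∀ i, 0 < Matrix.vecMul y A i)
    (t : Fin d → ℝ)
    (hne : {x : Fin m → ℝ | (∀ i, 0 < x i) ∧ A.mulVec x = t}.Nonempty) :
    ∃ xhat : Fin m → ℝ,
      ((∀ i, 0 < xhat i) ∧ A.mulVec xhat = t) ∧
      (∃ y : Fin d → ℝ, (fun i => (xhat i)⁻¹) = Matrix.vecMul y A) ∧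
      (∀ x : Fin m → ℝ, (∀ i, 0 < x i) → A.mulVec x = t →
        (∃ y : Fin d → ℝ, (fun i => (x i)⁻¹) = Matrix.vecMul y A) → x = xhat) ∧
      (∀ x : Fin m → ℝ, (∀ i, 0 < x i) → A.mulVec x = t → x ≠ xhat →
        ∏ i, x i < ∏ i, xhat i) := by
  classical
  obtain ⟨x₀, hx₀pos, hx₀t⟩ := hne
  obtain ⟨y₀, hy₀⟩ := hrow
  set c : Fin m → ℝ := Matrix.vecMul y₀ A with hc
  -- the closed fiber
  set K : Set (Fin m → ℝ) := {x | (∀ i, 0 ≤ x i) ∧ A.mulVec x = t} with hK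
  have hx₀K : x₀ ∈ K := ⟨fun i => (hx₀pos i).le, hx₀t⟩
  -- K is bounded: c ⬝ᵥ x = y₀ ⬝ᵥ t on K
  have hdot : ∀ x ∈ K, c ⬝ᵥ x = y₀ ⬝ᵥ t := by
    intro x hx
    rw [hc, ← Matrix.dotProduct_mulVec, hx.2]
  set B : Fin m → ℝ := fun i => (y₀ ⬝ᵥ t) / c i with hB
  have hKsub : K ⊆ Set.Icc 0 B := by
    intro x hx
    constructor
    · intro i; exact hx.1 i
    · intro i
      have hsum := hdot x hx
      have hle : c i * x i ≤ ∑ j, c j * x j :=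
        Finset.single_le_sum (f := fun j => c j * x j)
          (fun j _ => mul_nonneg (hy₀ j).le (hx.1 j)) (Finset.mem_univ i)
      rw [dotProduct] at hsum
      have hcx : c i * x i ≤ y₀ ⬝ᵥ t := by rw [← hsum]; exact hle
      show x i ≤ y₀ ⬝ᵥ t / c i
      rw [le_div_iff₀ (hy₀ i)]
      calc x i * c i = c i * x i := mul_comm _ _
        _ ≤ y₀ ⬝ᵥ t := hcx
  have hKclosed : IsClosed K := by
    have h1 : IsClosed {x : Fin m → ℝ | ∀ i, 0 ≤ x i} := by
      have : {x : Fin m → ℝ | ∀ i, 0 ≤ x i} = ⋂ i, {x | 0 ≤ x i} := by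
        ext x; simp
      rw [this]
      exact isClosed_iInter fun i => isClosed_le continuous_const (continuous_apply i)
    have h2 : IsClosed {x : Fin m → ℝ | A.mulVec x = t} := by
      have hcont : Continuous fun x : Fin m → ℝ => A.mulVec x :=
        (A.mulVecLin : (Fin m → ℝ) →ₗ[ℝ] Fin d → ℝ).continuous_of_finiteDimensional
      exact isClosed_eq hcont continuous_const
    exact h1.inter h2
  have hKcomp : IsCompact K :=
    (isCompact_Icc).of_isClosed_subset hKclosed hKsub
  have hfc : Continuous fun x : Fin m → ℝ => ∏ i, x i :=
    continuous_finset_prod _ fun i _ => continuous_apply i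
  obtain ⟨xhat, hxhatK, hmax⟩ :=
    hKcomp.exists_isMaxOn ⟨x₀, hx₀K⟩ hfc.continuousOn
  have hmax' : ∀ x ∈ K, ∏ i, x i ≤ ∏ i, xhat i := fun x hx => hmax hx
  have hprodpos : 0 < ∏ i, xhat i :=
    lt_of_lt_of_le (Finset.prod_pos fun i _ => hx₀pos i) (hmax' x₀ hx₀K)
  have hxhatpos : ∀ i, 0 < xhat i := by
    intro i
    rcases lt_or_eq_of_le (hxhatK.1 i) with h | h
    · exact h
    · exfalso
      rw [Finset.prod_eq_zero (Finset.mem_univ i) h.symm] at hprodpos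
      exact lt_irrefl 0 hprodpos
  -- strict maximality over the open fiber
  have hstrict : ∀ x : Fin m → ℝ, (∀ i, 0 < x i) → A.mulVec x = t → x ≠ xhat →
      ∏ i, x i < ∏ i, xhat i := by
    intro x hxpos hxt hxne
    have hxK : x ∈ K := ⟨fun i => (hxpos i).le, hxt⟩
    rcases lt_or_eq_of_le (hmax' x hxK) with h | h
    · exact h
    · exfalso
      set z : Fin m → ℝ := fun i => (x i + xhat i) / 2 with hz
      have hzK : z ∈ K := by
        constructor
        · intro i
          have := hxpos i; have := hxhatpos i
          have : (0:ℝ) < x i + xhat i := by linarith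
          show 0 ≤ (x i + xhat i) / 2
          linarith
        · have : z = (2 : ℝ)⁻¹ • (x + xhat) := by
            funext i; simp [hz, Pi.smul_apply]; ring
          rw [this, Matrix.mulVec_smul, Matrix.mulVec_add, hxt, hxhatK.2]
          funext j; simp; ring
      have hlt := prod_mid_sq x xhat hxpos hxhatpos hxne
      have hzle := hmax' z hzK
      have hzpos : 0 < ∏ i, z i := Finset.prod_pos fun i _ => by
        have h1 := hxpos i; have h2 := hxhatpos i
        show (0:ℝ) < (x i + xhat i) / 2
        linarith
      nlinarith [hlt, hzle, hzpos, hprodpos, h]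
  -- first-order condition: reciprocal orthogonal to kernel
  have horth : ∀ v : Fin m → ℝ, A.mulVec v = 0 →
      (fun i => (xhat i)⁻¹) ⬝ᵥ v = 0 := by
    intro v hv
    set g : ℝ → ℝ := fun ε => ∏ i, (xhat i + ε * v i) with hg
    have hloc : IsLocalMax g 0 := by
      have hopen : IsOpen {u : Fin m → ℝ | ∀ i, 0 < u i} := by
        have : {u : Fin m → ℝ | ∀ i, 0 < u i} = ⋂ i, {u | 0 < u i} := by ext u; simp
        rw [this]
        exact isOpen_iInter_of_finite fun i => isOpen_lt continuous_const (continuous_apply i)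
      have hcont : Continuous fun ε : ℝ => xhat + ε • v := by continuity
      have hmem : (fun ε : ℝ => xhat + ε • v) 0 ∈ {u : Fin m → ℝ | ∀ i, 0 < u i} := by
        simpa using hxhatpos
      have hev : ∀ᶠ ε in nhds (0 : ℝ), (xhat + ε • v) ∈ {u : Fin m → ℝ | ∀ i, 0 < u i} :=
        hcont.continuousAt.eventually_mem (hopen.mem_nhds hmem)
      filter_upwards [hev] with ε hε
      have hKmem : (xhat + ε • v) ∈ K := by
        refine ⟨fun i => (hε i).le, ?_⟩
        rw [Matrix.mulVec_add, Matrix.mulVec_smul, hv, hxhatK.2]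
        simp
      have := hmax' (xhat + ε • v) hKmem
      have hgε : g ε = ∏ i, (xhat + ε • v) i := by
        simp [hg, Pi.add_apply, Pi.smul_apply, smul_eq_mul]
      have hg0 : g 0 = ∏ i, xhat i := by simp [hg]
      rw [hgε, hg0]; exact this
    have hderiv : HasDerivAt g (∑ i, (∏ j ∈ Finset.univ.erase i, xhat j) • v i) 0 := by
      have h1 : ∀ i ∈ Finset.univ (α := Fin m),
          HasDerivAt (fun ε : ℝ => xhat i + ε * v i) (v i) 0 := by
        intro i _
        simpa using ((hasDerivAt_id (0:ℝ)).mul_const (v i)).const_add (xhat i)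
      have h2 := HasDerivAt.fun_finsetProd h1
      simp only [zero_mul, add_zero] at h2
      exact h2
    have hD := hloc.deriv_eq_zero
    rw [hderiv.deriv] at hD
    -- convert to dot product with reciprocals
    have hfactor : ∀ i : Fin m, (∏ j ∈ Finset.univ.erase i, xhat j)
        = (∏ j, xhat j) * (xhat i)⁻¹ := by
      intro i
      rw [← Finset.mul_prod_erase Finset.univ xhat (Finset.mem_univ i)]
      field_simp [(hxhatpos i).ne']
    have : (∏ j, xhat j) * ((fun i => (xhat i)⁻¹) ⬝ᵥ v) = 0 := by
      rw [dotProduct, Finset.mul_sum]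
      rw [← hD]
      refine Finset.sum_congr rfl fun i _ => ?_
      rw [hfactor i]; simp [smul_eq_mul]; ring
    rcases mul_eq_zero.mp this with h | h
    · exact absurd h hprodpos.ne'
    · exact h
  obtain ⟨yh, hyh⟩ := mem_row_space_of_orth A (fun i => (xhat i)⁻¹) horth
  -- uniqueness of the point with reciprocal in row space
  have huniq : ∀ x : Fin m → ℝ, (∀ i, 0 < x i) → A.mulVec x = t →
      (∃ y : Fin d → ℝ, (fun i => (x i)⁻¹) = Matrix.vecMul y A) → x = xhat := by
    intro x hxpos hxt ⟨yx, hyx⟩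
    have hker : A.mulVec (x - xhat) = 0 := by
      rw [Matrix.mulVec_sub, hxt, hxhatK.2, sub_self]
    have hS : ∑ i, ((x i)⁻¹ - (xhat i)⁻¹) * (x i - xhat i) = 0 := by
      have e1 : (fun i => (x i)⁻¹ - (xhat i)⁻¹) = Matrix.vecMul (yx - yh) A := by
        funext i
        rw [Matrix.sub_vecMul]
        simp only [Pi.sub_apply]
        rw [← hyx, ← hyh]
      calc ∑ i, ((x i)⁻¹ - (xhat i)⁻¹) * (x i - xhat i)
          = (fun i => (x i)⁻¹ - (xhat i)⁻¹) ⬝ᵥ (x - xhat) := by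
            simp [dotProduct]
        _ = Matrix.vecMul (yx - yh) A ⬝ᵥ (x - xhat) := by rw [e1]
        _ = (yx - yh) ⬝ᵥ A.mulVec (x - xhat) := (Matrix.dotProduct_mulVec _ _ _).symm
        _ = 0 := by rw [hker, dotProduct_zero]
    have hterm : ∀ i : Fin m, ((x i)⁻¹ - (xhat i)⁻¹) * (x i - xhat i) ≤ 0 := by
      intro i
      have ha := hxpos i; have hb := hxhatpos i
      have key : ((x i)⁻¹ - (xhat i)⁻¹) * (x i - xhat i)
          = -((x i - xhat i) ^ 2 / (x i * xhat i)) := by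
        field_simp
        ring
      rw [key]
      have : 0 ≤ (x i - xhat i) ^ 2 / (x i * xhat i) := by positivity
      linarith
    have hall := (Finset.sum_eq_zero_iff_of_nonpos fun i _ => hterm i).mp hS
    funext i
    have h0 := hall i (Finset.mem_univ i)
    have ha := hxpos i; have hb := hxhatpos i
    by_contra hne
    have h1 : ((x i)⁻¹ - (xhat i)⁻¹) * (x i - xhat i)
        = -((x i - xhat i) ^ 2 / (x i * xhat i)) := by field_simp; ring
    rw [h1] at h0
    have h2 : 0 < (x i - xhat i) ^ 2 / (x i * xhat i) := by
      have : x i - xhat i ≠ 0 := sub_ne_zero.mpr hne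
      positivity
    linarith
  exact ⟨xhat, ⟨hxhatpos, hxhatK.2⟩, ⟨yh, hyh⟩, huniq, hstrict⟩
end

section
/- For λ = (λ_1, λ_2, λ_3) in the open cube (−1,1)^3, define t_i(λ) = 1/(1+λ_i) − 1/(1−λ_i) for i = 1,2,3 and t_4(λ) = ∑_{i=1}^3 (1/(1+λ_i) + 1/(1−λ_i)). Then the map λ ↦ (t_1(λ)/t_4(λ), t_2(λ)/t_4(λ), t_3(λ)/t_4(λ)) is a bijection from the open cube (−1,1)^3 onto the open octahedron {t ∈ ℝ^3 : |t_1| + |t_2| + |t_3| < 1}. -/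
open Real

private lemma pair_ge_two' {a : ℝ} (h1 : -1 < a) (h2 : a < 1) :
    2 ≤ 1/(1+a) + 1/(1-a) := by
  have ha : 0 < 1 + a := by linarith
  have hb : 0 < 1 - a := by linarith
  rw [div_add_div _ _ ha.ne' hb.ne', le_div_iff₀ (by positivity)]
  nlinarith [sq_nonneg a]

private lemma abs_diff_lt' {a : ℝ} (h1 : -1 < a) (h2 : a < 1) :
    |1/(1+a) - 1/(1-a)| < 1/(1+a) + 1/(1-a) := by
  have ha : 0 < 1 + a := by linarith
  have hb : 0 < 1 - a := by linarith
  rw [abs_lt]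
  constructor <;> [nlinarith [one_div_pos.2 ha]; nlinarith [one_div_pos.2 hb]]

private lemma diff_inj' {a b : ℝ} (ha1 : -1 < a) (ha2 : a < 1) (hb1 : -1 < b) (hb2 : b < 1)
    (h : 1/(1+a) - 1/(1-a) = 1/(1+b) - 1/(1-b)) : a = b := by
  have hA : 0 < 1 + a := by linarith
  have hB : 0 < 1 - a := by linarith
  have hC : 0 < 1 + b := by linarith
  have hD : 0 < 1 - b := by linarith
  field_simp at h
  have h1 : (a - b) * (1 + a*b) = 0 := by nlinarith [h]
  have h2 : 0 < 1 + a*b := by nlinarith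
  rcases mul_eq_zero.1 h1 with h3 | h3
  · linarith
  · linarith

private lemma sqrt_ge' {c μ : ℝ} (hμ : 0 ≤ μ) : |c| * μ ≤ Real.sqrt (1 + c^2*μ^2) := by
  have : |c| * μ = Real.sqrt (c^2*μ^2) := by
    rw [show c^2*μ^2 = (|c| * μ)^2 by rw [mul_pow, sq_abs], Real.sqrt_sq (by positivity)]
  rw [this]
  exact Real.sqrt_le_sqrt (by nlinarith)

private lemma sqrt_le_one_add' {c μ : ℝ} (hμ : 0 ≤ μ) :
    Real.sqrt (1 + c^2*μ^2) ≤ 1 + |c| * μ := by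
  rw [show (1:ℝ) + |c| * μ = Real.sqrt ((1+|c| * μ)^2) from (Real.sqrt_sq (by positivity)).symm]
  exact Real.sqrt_le_sqrt (by nlinarith [abs_nonneg c, sq_abs c])

private lemma sqrt_diff' {c μ μ' : ℝ} (hμ : 0 ≤ μ) (h : μ ≤ μ') :
    Real.sqrt (1 + c^2*μ'^2) - Real.sqrt (1 + c^2*μ^2) ≤ |c| * (μ' - μ) := by
  have h1 : (0:ℝ) ≤ Real.sqrt (1 + c^2*μ^2) + |c| * (μ'-μ) := by
    have := Real.sqrt_nonneg (1 + c^2*μ^2)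
    have := mul_nonneg (abs_nonneg c) (sub_nonneg.2 h)
    linarith
  have h2 : Real.sqrt (1 + c^2*μ^2)^2 = 1 + c^2*μ^2 := Real.sq_sqrt (by positivity)
  have h3 := sqrt_ge' (c := c) hμ
  have key : Real.sqrt (1 + c^2*μ'^2) ≤ Real.sqrt (1 + c^2*μ^2) + |c| * (μ'-μ) := by
    rw [show Real.sqrt (1+c^2*μ^2) + |c| * (μ'-μ)
        = Real.sqrt ((Real.sqrt (1+c^2*μ^2) + |c| * (μ'-μ))^2) from (Real.sqrt_sq h1).symm]
    apply Real.sqrt_le_sqrt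
    nlinarith [sq_abs c, mul_le_mul_of_nonneg_left h3
      (by have := mul_nonneg (abs_nonneg c) (sub_nonneg.2 h); linarith :
        (0:ℝ) ≤ 2*(|c| * (μ'-μ))), abs_nonneg c]
  linarith

private lemma mu_unique' {c0 c1 c2 μ μ' : ℝ} (hσ : |c0| + |c1| + |c2| < 1)
    (hμ : 0 ≤ μ) (hμ' : 0 ≤ μ')
    (e : μ = 3 + Real.sqrt (1+c0^2*μ^2) + Real.sqrt (1+c1^2*μ^2) + Real.sqrt (1+c2^2*μ^2))
    (e' : μ' = 3 + Real.sqrt (1+c0^2*μ'^2) + Real.sqrt (1+c1^2*μ'^2) + Real.sqrt (1+c2^2*μ'^2)) :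
    μ = μ' := by
  rcases lt_trichotomy μ μ' with h | h | h
  · exfalso
    have d0 := sqrt_diff' (c := c0) hμ h.le
    have d1 := sqrt_diff' (c := c1) hμ h.le
    have d2 := sqrt_diff' (c := c2) hμ h.le
    nlinarith [mul_nonneg (abs_nonneg c0) (sub_nonneg.2 h.le)]
  · exact h
  · exfalso
    have d0 := sqrt_diff' (c := c0) hμ' h.le
    have d1 := sqrt_diff' (c := c1) hμ' h.le
    have d2 := sqrt_diff' (c := c2) hμ' h.le
    nlinarith [mul_nonneg (abs_nonneg c0) (sub_nonneg.2 h.le)]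

private lemma sqrt_one_add' {a : ℝ} (h1 : -1 < a) (h2 : a < 1) :
    Real.sqrt (1 + (1/(1+a) - 1/(1-a))^2) = (1+a^2)/(1-a^2) := by
  have ha : 0 < 1 + a := by linarith
  have hb : 0 < 1 - a := by linarith
  have hc : 0 < 1 - a^2 := by nlinarith
  rw [show 1 + (1/(1+a) - 1/(1-a))^2 = ((1+a^2)/(1-a^2))^2 by field_simp; ring]
  exact Real.sqrt_sq (by positivity)

private lemma pair_sum_eq' {a : ℝ} (h1 : -1 < a) (h2 : a < 1) :
    1/(1+a) + 1/(1-a) = 1 + (1+a^2)/(1-a^2) := by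
  have ha : 0 < 1 + a := by linarith
  have hb : 0 < 1 - a := by linarith
  have hc : 0 < 1 - a^2 := by nlinarith
  field_simp
  ring

private lemma coord_mem' {c μ : ℝ} (hμ : 0 ≤ μ) :
    -(c*μ) / (1 + Real.sqrt (1 + c^2*μ^2)) ∈ Set.Ioo (-1:ℝ) 1 := by
  have hs0 := Real.sqrt_nonneg (1 + c^2*μ^2)
  have h3 := sqrt_ge' (c := c) hμ
  have habs : |c*μ| = |c| * μ := by rw [abs_mul, abs_of_nonneg hμ]
  have hS : 0 < 1 + Real.sqrt (1+c^2*μ^2) := by linarith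
  rw [Set.mem_Ioo, ← abs_lt, abs_div, abs_neg, habs, abs_of_pos hS, div_lt_one hS]
  linarith

private lemma pair_eval' {c μ : ℝ} (hμ : 0 ≤ μ) :
    (1 / (1 + -(c*μ) / (1 + Real.sqrt (1 + c^2*μ^2)))
      + 1 / (1 - -(c*μ) / (1 + Real.sqrt (1 + c^2*μ^2)))
      = 1 + Real.sqrt (1 + c^2*μ^2)) ∧
    (1 / (1 + -(c*μ) / (1 + Real.sqrt (1 + c^2*μ^2)))
      - 1 / (1 - -(c*μ) / (1 + Real.sqrt (1 + c^2*μ^2)))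
      = c * μ) := by
  set s := Real.sqrt (1 + c^2*μ^2) with hs
  have hs0 : 0 ≤ s := Real.sqrt_nonneg _
  have hs2 : s^2 = 1 + c^2*μ^2 := Real.sq_sqrt (by positivity)
  have habs : |c * μ| = |c| * μ := by rw [abs_mul, abs_of_nonneg hμ]
  have h3 : |c| * μ ≤ s := sqrt_ge' hμ
  have hc1 : c*μ ≤ s := by have := le_abs_self (c*μ); linarith [habs ▸ this]
  have hc2 : -(c*μ) ≤ s := by have := neg_abs_le (c*μ); nlinarith [abs_nonneg (c*μ)]
  have hA : 0 < 1 + s - c*μ := by linarith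
  have hB : 0 < 1 + s + c*μ := by linarith
  have hS : 0 < 1 + s := by linarith
  have hx1 : 1 + -(c*μ) / (1 + s) = (1 + s - c*μ) / (1 + s) := by field_simp <;> ring
  have hx2 : 1 - -(c*μ) / (1 + s) = (1 + s + c*μ) / (1 + s) := by field_simp <;> ring
  rw [hx1, hx2, one_div_div, one_div_div]
  constructor
  · rw [div_add_div _ _ hA.ne' hB.ne', div_eq_iff (by positivity)]
    linear_combination (-(1 + s)) * hs2
  · rw [div_sub_div _ _ hA.ne' hB.ne', div_eq_iff (by positivity)]
    linear_combination (-(c*μ)) * hs2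

/-- Morphing a cube into an octahedron: the map
`λ ↦ (t₁(λ)/t₄(λ), t₂(λ)/t₄(λ), t₃(λ)/t₄(λ))` with
`tᵢ(λ) = 1/(1+λᵢ) − 1/(1−λᵢ)` and `t₄(λ) = ∑ᵢ (1/(1+λᵢ) + 1/(1−λᵢ))`
is a bijection from the open cube `(−1,1)³` onto the open octahedron
`{t : |t₁| + |t₂| + |t₃| < 1}`. -/
theorem cube_to_octahedron_bijOn :
    Set.BijOn
      (fun l : Fin 3 → ℝ => fun i : Fin 3 =>
        (1 / (1 + l i) - 1 / (1 - l i)) /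
          (∑ j : Fin 3, (1 / (1 + l j) + 1 / (1 - l j))))
      {l : Fin 3 → ℝ | ∀ i, l i ∈ Set.Ioo (-1 : ℝ) 1}
      {t : Fin 3 → ℝ | |t 0| + |t 1| + |t 2| < 1} := by
  have hmaps : Set.MapsTo
      (fun l : Fin 3 → ℝ => fun i : Fin 3 =>
        (1 / (1 + l i) - 1 / (1 - l i)) /
          (∑ j : Fin 3, (1 / (1 + l j) + 1 / (1 - l j))))
      {l : Fin 3 → ℝ | ∀ i, l i ∈ Set.Ioo (-1 : ℝ) 1}
      {t : Fin 3 → ℝ | |t 0| + |t 1| + |t 2| < 1} := by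
    intro l hl
    have h0 := hl 0; have h1 := hl 1; have h2 := hl 2
    rw [Set.mem_Ioo] at h0 h1 h2
    simp only [Set.mem_setOf_eq, Fin.sum_univ_three]
    have p0 := pair_ge_two' h0.1 h0.2
    have p1 := pair_ge_two' h1.1 h1.2
    have p2 := pair_ge_two' h2.1 h2.2
    have hD : 0 < (1/(1+l 0)+1/(1-l 0)) + (1/(1+l 1)+1/(1-l 1)) + (1/(1+l 2)+1/(1-l 2)) := by
      linarith
    rw [abs_div, abs_div, abs_div, abs_of_pos hD, ← add_div, ← add_div,
      div_lt_one hD]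
    have a0 := abs_diff_lt' h0.1 h0.2
    have a1 := abs_diff_lt' h1.1 h1.2
    have a2 := abs_diff_lt' h2.1 h2.2
    linarith
  refine ⟨hmaps, ?_, ?_⟩
  · -- InjOn
    intro l hl l' hl' heq
    have h0 := hl 0; have h1 := hl 1; have h2 := hl 2
    have h0' := hl' 0; have h1' := hl' 1; have h2' := hl' 2
    rw [Set.mem_Ioo] at h0 h1 h2 h0' h1' h2'
    have p0 := pair_ge_two' h0.1 h0.2
    have p1 := pair_ge_two' h1.1 h1.2
    have p2 := pair_ge_two' h2.1 h2.2
    have p0' := pair_ge_two' h0'.1 h0'.2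
    have p1' := pair_ge_two' h1'.1 h1'.2
    have p2' := pair_ge_two' h2'.1 h2'.2
    set μ := (1/(1+l 0)+1/(1-l 0)) + (1/(1+l 1)+1/(1-l 1)) + (1/(1+l 2)+1/(1-l 2)) with hμdef
    set μ' := (1/(1+l' 0)+1/(1-l' 0)) + (1/(1+l' 1)+1/(1-l' 1)) + (1/(1+l' 2)+1/(1-l' 2))
      with hμ'def
    have hμpos : 0 < μ := by rw [hμdef]; linarith
    have hμ'pos : 0 < μ' := by rw [hμ'def]; linarith
    have heq0 := congrFun heq 0
    have heq1 := congrFun heq 1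
    have heq2 := congrFun heq 2
    simp only [Fin.sum_univ_three, ← hμdef, ← hμ'def] at heq0 heq1 heq2
    -- the common value t
    have hoct := hmaps hl
    simp only [Set.mem_setOf_eq, Fin.sum_univ_three, ← hμdef] at hoct
    -- key equation for μ
    have sq_eq : ∀ a : ℝ, -1 < a → a < 1 →
        Real.sqrt (1 + ((1/(1+a) - 1/(1-a))/μ)^2 * μ^2)
          = (1+a^2)/(1-a^2) := by
      intro a ha1 ha2
      rw [show (1 + ((1/(1+a) - 1/(1-a))/μ)^2 * μ^2) = 1 + (1/(1+a) - 1/(1-a))^2 by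
        field_simp]
      exact sqrt_one_add' ha1 ha2
    have sq_eq' : ∀ a : ℝ, -1 < a → a < 1 →
        Real.sqrt (1 + ((1/(1+a) - 1/(1-a))/μ')^2 * μ'^2)
          = (1+a^2)/(1-a^2) := by
      intro a ha1 ha2
      rw [show (1 + ((1/(1+a) - 1/(1-a))/μ')^2 * μ'^2) = 1 + (1/(1+a) - 1/(1-a))^2 by
        field_simp]
      exact sqrt_one_add' ha1 ha2
    set c0 := (1/(1+l 0) - 1/(1-l 0))/μ with hc0
    set c1 := (1/(1+l 1) - 1/(1-l 1))/μ with hc1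
    set c2 := (1/(1+l 2) - 1/(1-l 2))/μ with hc2
    have e : μ = 3 + Real.sqrt (1+c0^2*μ^2) + Real.sqrt (1+c1^2*μ^2)
        + Real.sqrt (1+c2^2*μ^2) := by
      rw [hc0, hc1, hc2, sq_eq _ h0.1 h0.2, sq_eq _ h1.1 h1.2, sq_eq _ h2.1 h2.2, hμdef,
        pair_sum_eq' h0.1 h0.2, pair_sum_eq' h1.1 h1.2, pair_sum_eq' h2.1 h2.2]
      ring
    have e' : μ' = 3 + Real.sqrt (1+c0^2*μ'^2) + Real.sqrt (1+c1^2*μ'^2)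
        + Real.sqrt (1+c2^2*μ'^2) := by
      rw [heq0, heq1, heq2, sq_eq' _ h0'.1 h0'.2, sq_eq' _ h1'.1 h1'.2,
        sq_eq' _ h2'.1 h2'.2, hμ'def,
        pair_sum_eq' h0'.1 h0'.2, pair_sum_eq' h1'.1 h1'.2, pair_sum_eq' h2'.1 h2'.2]
      ring
    have hμeq : μ = μ' := mu_unique' hoct hμpos.le hμ'pos.le e e'
    funext i
    have key : ∀ i : Fin 3,
        1/(1+l i) - 1/(1-l i) = 1/(1+l' i) - 1/(1-l' i) := by
      intro j
      have hj := congrFun heq j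
      simp only [Fin.sum_univ_three, ← hμdef, ← hμ'def] at hj
      rw [← hμeq, div_eq_div_iff hμpos.ne' hμpos.ne'] at hj
      exact mul_right_cancel₀ hμpos.ne' hj
    fin_cases i
    · exact diff_inj' h0.1 h0.2 h0'.1 h0'.2 (key 0)
    · exact diff_inj' h1.1 h1.2 h1'.1 h1'.2 (key 1)
    · exact diff_inj' h2.1 h2.2 h2'.1 h2'.2 (key 2)
  · -- SurjOn
    intro t ht
    simp only [Set.mem_setOf_eq] at ht
    have hσ0 : (0:ℝ) ≤ |t 0| + |t 1| + |t 2| := by positivity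
    have h1σ : 0 < 1 - (|t 0| + |t 1| + |t 2|) := by linarith
    set σ := |t 0| + |t 1| + |t 2| with hσ
    set g : ℝ → ℝ := fun μ => μ - (3 + Real.sqrt (1+(t 0)^2*μ^2)
      + Real.sqrt (1+(t 1)^2*μ^2) + Real.sqrt (1+(t 2)^2*μ^2)) with hg
    have hgc : Continuous g := by
      apply Continuous.sub continuous_id
      fun_prop
    set M := 7/(1-σ) with hM
    have hM0 : (0:ℝ) ≤ M := by positivity
    have hg0 : g 0 = -6 := by norm_num [hg]
    have hgM : 1 ≤ g M := by
      have b0 := sqrt_le_one_add' (c := t 0) hM0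
      have b1 := sqrt_le_one_add' (c := t 1) hM0
      have b2 := sqrt_le_one_add' (c := t 2) hM0
      have hM7 : M * (1-σ) = 7 := by
        rw [hM]; field_simp
      have hM2 : M - (|t 0| * M + |t 1| * M + |t 2| * M) = 7 := by
        linear_combination hM7
      simp only [hg]
      linarith
    have h0mem : (0:ℝ) ∈ Set.Icc (g 0) (g M) :=
      Set.mem_Icc.2 ⟨by rw [hg0]; norm_num, by linarith⟩
    obtain ⟨μ, hμIcc, hgμ⟩ := intermediate_value_Icc hM0 hgc.continuousOn h0mem
    have hμ0 : 0 ≤ μ := hμIcc.1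
    have hs00 := Real.sqrt_nonneg (1+(t 0)^2*μ^2)
    have hs01 := Real.sqrt_nonneg (1+(t 1)^2*μ^2)
    have hs02 := Real.sqrt_nonneg (1+(t 2)^2*μ^2)
    have hμ3 : μ = 3 + Real.sqrt (1+(t 0)^2*μ^2) + Real.sqrt (1+(t 1)^2*μ^2)
        + Real.sqrt (1+(t 2)^2*μ^2) := by
      simp only [hg] at hgμ; linarith
    have hμpos : 0 < μ := by linarith
    refine ⟨fun i => -(t i * μ) / (1 + Real.sqrt (1 + (t i)^2*μ^2)), ?_, ?_⟩
    · intro i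
      exact coord_mem' (c := t i) hμ0
    · funext i
      simp only [Fin.sum_univ_three]
      have P0 := pair_eval' (c := t 0) hμ0
      have P1 := pair_eval' (c := t 1) hμ0
      have P2 := pair_eval' (c := t 2) hμ0
      rw [P0.1, P1.1, P2.1]
      have hden : (1 + Real.sqrt (1+(t 0)^2*μ^2)) + (1 + Real.sqrt (1+(t 1)^2*μ^2))
          + (1 + Real.sqrt (1+(t 2)^2*μ^2)) = μ := by linarith
      rw [hden]
      have Pi := pair_eval' (c := t i) hμ0
      rw [Pi.2, mul_div_assoc, div_self hμpos.ne', mul_one]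
end

section
/- Let E be a symmetric, irreflexive relation on {1,…,m} (the edge set of a graph G), and let E* be the edge set of the suspension graph G* on {0,1,…,m}, namely E* = E ∪ {(0,j), (j,0) : 1 ≤ j ≤ m}. Let S* be a positive definite real (m+1)×(m+1) matrix with rows/columns indexed by 0,1,…,m; write a = S*_{00}, v = (S*_{01},…,S*_{0m}), S' for the lower-right m×m block of S*, and S = S' − (1/a)·v^T v for the Schur complement. Suppose Σ̂ is a positive definite m×m matrix with Σ̂_{ij} = S_{ij} whenever i = j or (i,j) ∈ E, and (Σ̂^{-1})_{ij} = 0 whenever i ≠ j and (i,j) ∉ E. Define the (m+1)×(m+1) block matrix Σ̂* = [[a, v],[v^T, Σ̂ + S' − S]] = [[a, v],[v^T, Σ̂ + (1/a)v^T v]]. Then: (1) Σ̂* is positive definite; (2) Σ̂*_{ij} = S*_{ij} whenever i = j or (i,j) ∈ E*; and (3) ((Σ̂*)^{-1})_{ij} = 0 whenever i ≠ j and (i,j) ∉ E*. Hence Σ̂* is the maximum likelihood estimate for S* in the Gaussian graphical model of G*. -/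
open Matrix

lemma myPosDef_conj {n : Type*} [Fintype n] [DecidableEq n]
    {D L : Matrix n n ℝ} (hD : D.PosDef) (hL : IsUnit L) : (L * D * Lᵀ).PosDef := by
  rw [posDef_iff_dotProduct_mulVec]
  constructor
  · show _ = _
    have hDt : Dᵀ = D := by
      rw [← conjTranspose_eq_transpose_of_trivial]; exact hD.isHermitian.eq
    simp [conjTranspose_eq_transpose_of_trivial, Matrix.transpose_mul, hDt, Matrix.mul_assoc]
  · intro x hx
    have hy : Lᵀ *ᵥ x ≠ 0 := by
      have : Function.Injective (Lᵀ).mulVec := mulVec_injective_iff_isUnit.mpr (by simpa using hL)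
      intro h
      exact hx (this (by simpa using h))
    have := hD.dotProduct_mulVec_pos hy
    simpa [Matrix.mul_assoc, ← Matrix.mulVec_mulVec, dotProduct_mulVec, star_trivial,
      ← mulVec_transpose] using this

lemma myPosDef_fromBlocks_diag {p q : Type*} [Fintype p] [DecidableEq p] [Fintype q] [DecidableEq q]
    {A : Matrix p p ℝ} {D : Matrix q q ℝ} (hA : A.PosDef) (hD : D.PosDef) :
    (Matrix.fromBlocks A 0 0 D).PosDef := by
  rw [posDef_iff_dotProduct_mulVec]
  constructor
  · show _ = _
    have hAt : Aᵀ = A := by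
      rw [← conjTranspose_eq_transpose_of_trivial]; exact hA.isHermitian.eq
    have hDt : Dᵀ = D := by
      rw [← conjTranspose_eq_transpose_of_trivial]; exact hD.isHermitian.eq
    simp [conjTranspose_eq_transpose_of_trivial, Matrix.fromBlocks_transpose, hAt, hDt]
  · intro x hx
    have hxel : x = Sum.elim (x ∘ Sum.inl) (x ∘ Sum.inr) := by
      ext (i | i) <;> rfl
    rw [hxel, fromBlocks_mulVec]
    simp only [Matrix.zero_mulVec, add_zero, zero_add, star_trivial]
    rw [sumElim_dotProduct_sumElim]
    rcases (not_and_or.mp (fun h : x ∘ Sum.inl = 0 ∧ x ∘ Sum.inr = 0 => hx (by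
      ext (i | i)
      · exact congrFun h.1 i
      · exact congrFun h.2 i))) with h | h
    · exact add_pos_of_pos_of_nonneg (by simpa using hA.dotProduct_mulVec_pos h) (by simpa using hD.posSemidef.dotProduct_mulVec_nonneg _)
    · exact add_pos_of_nonneg_of_pos (by simpa using hA.posSemidef.dotProduct_mulVec_nonneg _) (by simpa using hD.dotProduct_mulVec_pos h)



/-- The adjacency relation of the suspension graph `G*` of a graph `G` on
vertices `{1,…,m}`: the new vertex `0` (= `Sum.inl ()`) is joined to every old
vertex, and old vertices are joined as in `G`. -/
def suspensionAdj {m : ℕ} (E : Fin m → Fin m → Prop) :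
    Unit ⊕ Fin m → Unit ⊕ Fin m → Prop
  | Sum.inl _, Sum.inl _ => False
  | Sum.inl _, Sum.inr _ => True
  | Sum.inr _, Sum.inl _ => True
  | Sum.inr i, Sum.inr j => E i j

/-- The MLE on a suspension graph: if `Σ̂` is the MLE for the Schur complement
`S = S' − (1/a)·vᵀv` of a positive definite sample covariance matrix `S*` in
the Gaussian graphical model of `G`, then the block matrix
`Σ̂* = [[a, v],[vᵀ, Σ̂ + S' − S]]` is positive definite, matches `S*` on the
diagonal and on all edges of the suspension graph `G*`, and its inverse
vanishes on all non-edges of `G*`; i.e. `Σ̂*` is the MLE for `S*` in the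
Gaussian graphical model of `G*`. -/
theorem suspension_graph_mle
    (m : ℕ) (E : Fin m → Fin m → Prop)
    (hEsymm : ∀ i j, E i j → E j i) (hEirr : ∀ i, ¬ E i i)
    (Sstar : Matrix (Unit ⊕ Fin m) (Unit ⊕ Fin m) ℝ) (hSstar : Sstar.PosDef)
    (a : ℝ) (ha : a = Sstar (Sum.inl ()) (Sum.inl ()))
    (v : Fin m → ℝ) (hv : ∀ j, v j = Sstar (Sum.inl ()) (Sum.inr j))
    (S : Matrix (Fin m) (Fin m) ℝ)
    (hSdef : S = Sstar.submatrix Sum.inr Sum.inr - a⁻¹ • Matrix.vecMulVec v v)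
    (Sighat : Matrix (Fin m) (Fin m) ℝ) (hSighat : Sighat.PosDef)
    (hfit : ∀ i j, (i = j ∨ E i j) → Sighat i j = S i j)
    (hzero : ∀ i j, i ≠ j → ¬ E i j → Sighat⁻¹ i j = 0)
    (Sigstar : Matrix (Unit ⊕ Fin m) (Unit ⊕ Fin m) ℝ)
    (hSigstar : Sigstar = Matrix.fromBlocks
      (Matrix.of fun _ _ : Unit => a)
      (Matrix.of fun (_ : Unit) (j : Fin m) => v j)
      (Matrix.of fun (i : Fin m) (_ : Unit) => v i)
      (Sighat + (Sstar.submatrix Sum.inr Sum.inr - S))) :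
    Sigstar.PosDef ∧
    (∀ i j, (i = j ∨ suspensionAdj E i j) → Sigstar i j = Sstar i j) ∧
    (∀ i j, i ≠ j → ¬ suspensionAdj E i j → Sigstar⁻¹ i j = 0) := by
  -- a is positive
  have ha0 : 0 < a := by
    have hx : (Pi.single (Sum.inl ()) 1 : Unit ⊕ Fin m → ℝ) ≠ 0 := by
      intro h
      simpa using congrFun h (Sum.inl ())
    have := hSstar.dotProduct_mulVec_pos hx
    simpa [ha, Matrix.mulVec_single, single_dotProduct, star_trivial] using this
  have hane : a ≠ 0 := ha0.ne'
  set A : Matrix Unit Unit ℝ := Matrix.of fun _ _ : Unit => a with hA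
  set C : Matrix (Fin m) Unit ℝ := Matrix.of fun i _ => a⁻¹ * v i with hC
  set L : Matrix (Unit ⊕ Fin m) (Unit ⊕ Fin m) ℝ := fromBlocks 1 0 C 1 with hL
  set Dg : Matrix (Unit ⊕ Fin m) (Unit ⊕ Fin m) ℝ := fromBlocks A 0 0 Sighat with hDg
  have hApos : A.PosDef := by
    have : A = Matrix.diagonal (fun _ : Unit => a) := by
      ext ⟨⟩ ⟨⟩; simp [hA]
    rw [this]
    exact Matrix.PosDef.diagonal (fun _ => ha0)
  have hSS : Sstar.submatrix Sum.inr Sum.inr - S = a⁻¹ • Matrix.vecMulVec v v := by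
    rw [hSdef]; abel
  -- block decomposition
  have hLDg : L * Dg = fromBlocks A 0 (C * A) Sighat := by
    rw [hL, hDg]
    simp [fromBlocks_multiply]
  have hAC : A * Cᵀ = Matrix.of fun (_ : Unit) j => v j := by
    ext u j
    simp [hA, hC, Matrix.mul_apply]
    field_simp
  have hCA : C * A = Matrix.of fun i (_ : Unit) => v i := by
    ext i u
    simp [hA, hC, Matrix.mul_apply]
    field_simp
  have hCAC : C * A * Cᵀ = a⁻¹ • Matrix.vecMulVec v v := by
    ext i j
    simp [hA, hC, Matrix.mul_apply, Matrix.vecMulVec_apply]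
    field_simp
  have hprod : L * Dg * Lᵀ = fromBlocks A (A * Cᵀ) (C * A) (C * A * Cᵀ + Sighat) := by
    rw [hLDg, hL, fromBlocks_transpose]
    simp [fromBlocks_multiply, Matrix.mul_assoc]
  have hdecomp : Sigstar = L * Dg * Lᵀ := by
    rw [hprod, hCAC, hAC, hCA, hSigstar, hSS, add_comm Sighat]
  have hLdet : IsUnit L := by
    rw [Matrix.isUnit_iff_isUnit_det, hL, Matrix.det_fromBlocks_zero₁₂]
    simp
  have hposdef : Sigstar.PosDef := by
    rw [hdecomp]
    exact myPosDef_conj (myPosDef_fromBlocks_diag hApos hSighat) hLdet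
  -- the inverse
  set Ai : Matrix Unit Unit ℝ := Matrix.of fun _ _ : Unit => a⁻¹ with hAi
  set T1 : Matrix (Unit ⊕ Fin m) (Unit ⊕ Fin m) ℝ := fromBlocks 1 (-Cᵀ) 0 1 with hT1
  set T2 : Matrix (Unit ⊕ Fin m) (Unit ⊕ Fin m) ℝ := fromBlocks Ai 0 0 Sighat⁻¹ with hT2
  set T3 : Matrix (Unit ⊕ Fin m) (Unit ⊕ Fin m) ℝ := fromBlocks 1 0 (-C) 1 with hT3
  have h1 : Lᵀ * T1 = 1 := by
    rw [hL, hT1, fromBlocks_transpose]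
    simp [fromBlocks_multiply, ← fromBlocks_one]
  have h2 : Dg * T2 = 1 := by
    rw [hDg, hT2]
    simp only [fromBlocks_multiply, Matrix.mul_zero, Matrix.zero_mul, add_zero, zero_add]
    rw [Matrix.mul_nonsing_inv _ ((Matrix.isUnit_iff_isUnit_det _).mp hSighat.isUnit)]
    have : A * Ai = 1 := by
      ext ⟨⟩ ⟨⟩
      simp [hA, hAi, Matrix.mul_apply]
      field_simp
    rw [this, ← fromBlocks_one]
  have h3 : L * T3 = 1 := by
    rw [hL, hT3]
    simp [fromBlocks_multiply, ← fromBlocks_one]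
  have hmul : Sigstar * (T1 * (T2 * T3)) = 1 := by
    rw [hdecomp]
    simp only [Matrix.mul_assoc]
    rw [← Matrix.mul_assoc Lᵀ T1 (T2 * T3), h1, Matrix.one_mul,
      ← Matrix.mul_assoc Dg T2 T3, h2, Matrix.one_mul, h3]
  have hinv : Sigstar⁻¹ = T1 * (T2 * T3) := Matrix.inv_eq_right_inv hmul
  refine ⟨hposdef, ?_, ?_⟩
  · rintro (⟨⟩ | i) (⟨⟩ | j) hij
    · rw [hSigstar]; simp only [fromBlocks_apply₁₁, hA, Matrix.of_apply]; exact ha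
    · rw [hSigstar]; simp only [fromBlocks_apply₁₂, Matrix.of_apply]; exact hv j
    · rw [hSigstar]
      have : Sstar (Sum.inr i) (Sum.inl ()) = Sstar (Sum.inl ()) (Sum.inr i) := by
        conv_lhs => rw [← hSstar.isHermitian.eq]
        simp [Matrix.conjTranspose_apply]
      rw [this, ← hv i]
      simp only [fromBlocks_apply₂₁, Matrix.of_apply]
    · rcases hij with hij | hij
      · have : i = j := by injection hij
        subst this
        rw [hSigstar]
        simp [Matrix.add_apply, Matrix.sub_apply, hfit i i (Or.inl rfl)]
      · have hE : E i j := hij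
        rw [hSigstar]
        simp [Matrix.add_apply, Matrix.sub_apply, hfit i j (Or.inr hE)]
  · rintro (⟨⟩ | i) (⟨⟩ | j) hij hadj
    · exact absurd rfl hij
    · exact absurd trivial hadj
    · exact absurd trivial hadj
    · have hE : ¬ E i j := hadj
      have hij' : i ≠ j := fun h => hij (by rw [h])
      rw [hinv, hT1, hT2, hT3]
      have h0 := hzero i j hij' hE
      simp only [fromBlocks_multiply, Matrix.mul_zero, Matrix.zero_mul, Matrix.mul_one,
        Matrix.one_mul, add_zero, zero_add, fromBlocks_apply₂₂]
      simpa using h0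
end

section
/- Let {1,…,m} be partitioned into three disjoint sets A, B, C, and let Σ be a positive definite real m×m matrix such that (Σ^{-1})_{ab} = 0 for all a ∈ A and b ∈ B. Let Σ_{[A∪C]} denote the principal submatrix of Σ with rows and columns indexed by A ∪ C. Then the inverse of the submatrix agrees with the corresponding blocks of Σ^{-1} on all entries involving A: for all i, j ∈ A ∪ C with i ∈ A or j ∈ A, one has ((Σ_{[A∪C]})^{-1})_{ij} = (Σ^{-1})_{ij}. (In block form, writing K = Σ^{-1} and K^1 = (Σ_{[A∪C]})^{-1}, one has K^1_{AA} = K_{AA} and K^1_{AC} = K_{AC}.) -/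
set_option maxHeartbeats 1000000

open Matrix

/-- A principal submatrix (indexed by a subtype) of a positive definite real
matrix is positive definite. -/
lemma posDef_submatrix_subtype {n : Type*} [Fintype n] [DecidableEq n]
    {M : Matrix n n ℝ} (hM : M.PosDef) (s : Finset n) :
    (M.submatrix (Subtype.val : {x // x ∈ s} → n) Subtype.val).PosDef := by
  refine posDef_iff_dotProduct_mulVec.mpr ⟨hM.isHermitian.submatrix _, fun x hx => ?_⟩
  set y : n → ℝ := fun k => if h : k ∈ s then x ⟨k, h⟩ else 0 with hy
  have hy0 : y ≠ 0 := by
    intro h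
    apply hx
    funext k
    have := congrFun h k.val
    simpa [hy, k.prop] using this
  have hxy : ∀ k : {x // x ∈ s}, y k.val = x k := by
    intro k; simp [hy, k.prop]
  have hsum : ∀ f : n → ℝ, (∀ k, k ∉ s → f k = 0) →
      ∑ k : {x // x ∈ s}, f k.val = ∑ k : n, f k := by
    intro f hf
    rw [Finset.sum_coe_sort s (fun k => f k)]
    exact (Finset.sum_subset (Finset.subset_univ s)
      (fun k _ hk => hf k hk)).symm ▸ rfl
  have key : dotProduct (star x)
      ((M.submatrix (Subtype.val : {x // x ∈ s} → n) Subtype.val) *ᵥ x)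
      = dotProduct (star y) (M *ᵥ y) := by
    simp only [dotProduct, mulVec, star_trivial]
    rw [← hsum (fun i => y i * ∑ k, M i k * y k) (by intro k hk; simp [hy, hk])]
    refine Finset.sum_congr rfl fun i _ => ?_
    rw [hxy i]
    congr 1
    rw [← hsum (fun k => M i.val k * y k) (by intro k hk; simp [hy, hk])]
    exact Finset.sum_congr rfl fun k _ => by rw [hxy k, submatrix_apply]
  rw [key]
  exact hM.dotProduct_mulVec_pos hy0

/-- Decoupling of the MLE equations under a clique-sum separation: if
`{1,…,m} = A ⊔ B ⊔ C` and `Σ ≻ 0` satisfies `(Σ⁻¹)_{ab} = 0` for all `a ∈ A`,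
`b ∈ B`, then the inverse of the principal submatrix `Σ_{[A∪C]}` agrees with
the corresponding entries of `Σ⁻¹` whenever one of the indices lies in `A`
(in block form, `K¹_{AA} = K_{AA}` and `K¹_{AC} = K_{AC}`). -/
theorem submatrix_inverse_agrees_on_separated_block
    (m : ℕ) (A B C : Finset (Fin m))
    (hAB : Disjoint A B) (hAC : Disjoint A C) (hBC : Disjoint B C)
    (hcover : A ∪ B ∪ C = Finset.univ)
    (Sig : Matrix (Fin m) (Fin m) ℝ) (hSig : Sig.PosDef)
    (hzero : ∀ a ∈ A, ∀ b ∈ B, Sig⁻¹ a b = 0) :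
    ∀ i j : {x : Fin m // x ∈ A ∪ C},
      ((i : Fin m) ∈ A ∨ (j : Fin m) ∈ A) →
      (Sig.submatrix (Subtype.val : {x : Fin m // x ∈ A ∪ C} → Fin m)
          Subtype.val)⁻¹ i j
        = Sig⁻¹ (i : Fin m) (j : Fin m) := by
  set K := Sig⁻¹ with hK
  set T := Sig.submatrix (Subtype.val : {x : Fin m // x ∈ A ∪ C} → Fin m)
      Subtype.val with hT
  have hSigsymm : Sigᵀ = Sig := hSig.isHermitian.eq
  have hKsymm : Kᵀ = K := by
    rw [hK, transpose_nonsing_inv, hSigsymm]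
  have hKs : ∀ a b : Fin m, K a b = K b a := fun a b =>
    (congrFun (congrFun hKsymm a) b).symm
  have hTpd : T.PosDef := posDef_submatrix_subtype hSig _
  have hTdet : IsUnit T.det := hTpd.det_pos.ne'.isUnit
  have hSK : Sig * K = 1 := mul_nonsing_inv _ ((isUnit_iff_isUnit_det _).mp hSig.isUnit)
  -- key: for q with q.val ∈ A, the q-column of T⁻¹ is the q-column of K.
  have key : ∀ q : {x : Fin m // x ∈ A ∪ C}, (q : Fin m) ∈ A →
      ∀ p : {x : Fin m // x ∈ A ∪ C}, T⁻¹ p q = K p q := by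
    intro q hq p
    set c : {x : Fin m // x ∈ A ∪ C} → ℝ := fun k => K k q with hc
    have hKzero : ∀ b ∈ B, K b (q : Fin m) = 0 := fun b hb => by
      rw [hKs]; exact hzero q hq b hb
    have hTc : T *ᵥ c = fun p => if p = q then (1:ℝ) else 0 := by
      funext p
      have h1 : (T *ᵥ c) p = ∑ k : {x : Fin m // x ∈ A ∪ C},
          Sig (p : Fin m) (k : Fin m) * K (k : Fin m) (q : Fin m) := by
        simp [mulVec, dotProduct, hT, hc]
      have h2 : ∑ k : {x : Fin m // x ∈ A ∪ C},
          Sig (p : Fin m) (k : Fin m) * K (k : Fin m) (q : Fin m)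
          = ∑ k ∈ A ∪ C, Sig (p : Fin m) k * K k (q : Fin m) :=
        Finset.sum_coe_sort (A ∪ C) (fun k => Sig (p : Fin m) k * K k (q : Fin m))
      have huniv : (A ∪ C) ∪ B = Finset.univ := by
        rw [← hcover]; ac_rfl
      have hdisj : Disjoint (A ∪ C) B :=
        Finset.disjoint_union_left.mpr ⟨hAB, hBC.symm⟩
      have h3 : ∑ k ∈ (A ∪ C) ∪ B, Sig (p : Fin m) k * K k (q : Fin m)
          = ∑ k ∈ A ∪ C, Sig (p : Fin m) k * K k (q : Fin m)
            + ∑ k ∈ B, Sig (p : Fin m) k * K k (q : Fin m) :=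
        Finset.sum_union hdisj
      have h4 : ∑ k ∈ B, Sig (p : Fin m) k * K k (q : Fin m) = 0 :=
        Finset.sum_eq_zero fun k hk => by rw [hKzero k hk, mul_zero]
      have h5 : ∑ k : Fin m, Sig (p : Fin m) k * K k (q : Fin m)
          = (Sig * K) (p : Fin m) (q : Fin m) := (Matrix.mul_apply).symm
      rw [h1, h2]
      have := h3
      rw [huniv, h4, add_zero] at this
      rw [← this, h5, hSK, one_apply]
      exact if_congr Subtype.ext_iff.symm rfl rfl
    have hcinv : T⁻¹ *ᵥ (T *ᵥ c) = c := by
      rw [mulVec_mulVec, nonsing_inv_mul _ hTdet, one_mulVec]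
    have : c p = T⁻¹ p q := by
      conv_lhs => rw [← hcinv]
      rw [hTc]
      simp [mulVec, dotProduct, mul_ite]
    rw [← this]
  intro i j hij
  rcases hij with hi | hj
  · -- i ∈ A : use symmetry of T⁻¹
    have hTsymm : Tᵀ = T := by
      funext a b
      exact congrFun (congrFun hSigsymm a.val) b.val
    have hTinvsymm : (T⁻¹)ᵀ = T⁻¹ := by
      rw [transpose_nonsing_inv, hTsymm]
    have h1 : T⁻¹ i j = T⁻¹ j i :=
      (congrFun (congrFun hTinvsymm i) j).symm
    rw [h1, key i hi j, hKs]
  · exact key j hj i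
end
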